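/- arXiv:1607.00819 — 4 statements merged into one kernel-verified Lean document; each statement's English description precedes it below -/
import Mathlib

section
/- Let SF = (A, R) be a SETAF (or an AF) and ADF^SF its corresponding ADF. Then: X ⊆ A is a conflict-free extension of SF iff it is conflict-free in ADF^SF iff it is pd-acyclic conflict-free in ADF^SF; X is a stable extension of SF iff it is a model of ADF^SF iff it is stable in ADF^SF; X is the grounded extension of SF iff it is the grounded extension of ADF^SF iff it is the acyclic grounded extension of ADF^SF; and for σ ∈ {admissible, preferred, complete}, X is a σ extension of SF iff it is a cc-σ extension of ADF^SF iff it is a ca₂-σ extension of ADF^SF iff it is an aa-σ extension of ADF^SF. -/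
open Classical

universe u

namespace Dialectical

variable {α : Type u}

/-! ### Two-valued (partial) interpretations -/

/-- A partial two-valued interpretation: `some true` = t, `some false` = f, `none` = undefined. -/
abbrev Interp (α : Type u) := α → Option Bool

/-- The domain of an interpretation. -/
def idom (v : Interp α) : Set α := {a | v a ≠ none}

/-- The set of arguments mapped to t. -/
def tset (v : Interp α) : Set α := {a | v a = some true}

/-- The set of arguments mapped to f. -/
def fset (v : Interp α) : Set α := {a | v a = some false}

/-- `w` is a completion of `v` to the set `Z`. -/
def Completion (v w : Interp α) (Z : Set α) : Prop :=
  idom w = Z ∧ ∀ a ∈ idom v, w a = v a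

/-- The interpretation assigning t on `T` and f on `F' \ T`. -/
noncomputable def mkInterp (T F' : Set α) : Interp α :=
  fun a => if a ∈ T then some true else if a ∈ F' then some false else none

/-! ### Abstract dialectical frameworks -/

/-- An abstract dialectical framework: links and acceptance conditions
(`true` = in, `false` = out). -/
structure ADF (α : Type u) where
  L : α → α → Prop
  C : α → Set α → Bool

namespace ADF

variable (D : ADF α)

/-- The parents of an argument. -/
def par (a : α) : Set α := {p | D.L p a}

/-- Evaluating the acceptance condition of `s` under an interpretation. -/
def evalCond (s : α) (w : Interp α) : Bool := D.C s (tset w ∩ D.par s)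

/-- `s` is decisively in w.r.t. `v`. -/
def DecisivelyIn (v : Interp α) (s : α) : Prop :=
  ∀ w : Interp α, Completion v w (idom v ∪ D.par s) → D.evalCond s w = true

/-- `s` is decisively out w.r.t. `v`. -/
def DecisivelyOut (v : Interp α) (s : α) : Prop :=
  ∀ w : Interp α, Completion v w (idom v ∪ D.par s) → D.evalCond s w = false

/-- `v` is a minimal decisively in interpretation for `s` (`v ∈ min_dec(in,s)`). -/
def MinDecIn (v : Interp α) (s : α) : Prop :=
  D.DecisivelyIn v s ∧
  ∀ w : Interp α, D.DecisivelyIn w s → tset w ⊆ tset v → fset w ⊆ fset v →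
    tset w = tset v ∧ fset w = fset v

/-- `pd` is a positive dependency function on `X`. -/
def PDFun (X : Set α) (pd : α → Option (Interp α)) : Prop :=
  ∀ a ∈ X,
    (∀ v, pd a = some v → D.MinDecIn v a ∧ tset v ⊆ X) ∧
    (pd a = none → ¬ ∃ v, D.MinDecIn v a ∧ tset v ⊆ X)

end ADF

/-- The subset of `X` on which `pd` is non-null. -/
def soundDom (X : Set α) (pd : α → Option (Interp α)) : Set α :=
  {a ∈ X | pd a ≠ none}

namespace ADF
variable (D : ADF α)

/-- `pd` is a maximally sound pd-function of `X`. -/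
def MaxSound (X : Set α) (pd : α → Option (Interp α)) : Prop :=
  D.PDFun X pd ∧
  ¬ ∃ (X'' : Set α) (pd' : α → Option (Interp α)),
      D.PDFun X'' pd' ∧ (∀ a ∈ X'', pd' a ≠ none) ∧
      soundDom X pd ⊂ X'' ∧ X'' ⊆ X ∧
      ∀ a ∈ soundDom X pd, pd' a = pd a

end ADF

/-- The t-part of the interpretation assigned by `pd` to `a`. -/
def pdT (pd : α → Option (Interp α)) (a : α) : Set α :=
  {b | ∃ v, pd a = some v ∧ b ∈ tset v}

/-- The f-part of the interpretation assigned by `pd` to `a`. -/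
def pdF (pd : α → Option (Interp α)) (a : α) : Set α :=
  {b | ∃ v, pd a = some v ∧ b ∈ fset v}

/-- `(Fs, G, B)` is a partially acyclic positive dependency evaluation for `x`
based on the pd-function `pd` of `X`. -/
def IsPAEvalWith (pd : α → Option (Interp α)) (X : Set α)
    (x : α) (Fs : Set α) (G : List α) (B : Set α) : Prop :=
  (∀ a ∈ G, a ∉ Fs) ∧ G.Nodup ∧
  x ∈ X ∧ Fs ⊆ X ∧ (∀ a ∈ G, a ∈ X) ∧
  (∀ a ∈ Fs, pd a ≠ none) ∧ (∀ a ∈ G, pd a ≠ none) ∧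
  (G = [] → x ∈ Fs) ∧ (G ≠ [] → G.getLast? = some x) ∧
  (∀ i : ℕ, ∀ h : i < G.length,
      pdT pd (G.get ⟨i, h⟩) ⊆
        Fs ∪ {b | ∃ j : ℕ, ∃ hj : j < G.length, j < i ∧ G.get ⟨j, hj⟩ = b}) ∧
  (∀ a ∈ Fs, pdT pd a ⊆ Fs) ∧
  (∀ a ∈ Fs, ∃ b ∈ Fs, a ∈ pdT pd b) ∧
  B = (⋃ a ∈ Fs, pdF pd a) ∪ ⋃ a ∈ {c | c ∈ G}, pdF pd a

namespace ADF
variable (D : ADF α)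

/-- `(Fs, G, B)` is a partially acyclic positive dependency evaluation for `x` on `X`. -/
def PAEval (X : Set α) (x : α) (Fs : Set α) (G : List α) (B : Set α) : Prop :=
  ∃ pd, D.MaxSound X pd ∧ IsPAEvalWith pd X x Fs G B

/-- `(G, B)` is an acyclic positive dependency evaluation for `x` on `X`. -/
def AcyclicEval (X : Set α) (x : α) (G : List α) (B : Set α) : Prop :=
  D.PAEval X x ∅ G B

/-- The standard discarded set `X⁺`. -/
def stdDiscarded (X : Set α) : Set α :=
  {a | ∀ Fs G B, D.PAEval Set.univ a Fs G B → (B ∩ X).Nonempty}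

/-- The partially acyclic discarded set `X^{p+}`. -/
def pDiscarded (X : Set α) : Set α :=
  {a | ¬ ∃ Fs G B, D.PAEval Set.univ a Fs G B ∧ Fs ⊆ X ∧ B ∩ X = ∅}

/-- The acyclic discarded set `X^{a+}`. -/
def aDiscarded (X : Set α) : Set α :=
  {a | ∀ G B, D.AcyclicEval Set.univ a G B → (B ∩ X).Nonempty}

/-- The standard range of `X`. -/
noncomputable def stdRange (X : Set α) : Interp α := mkInterp X (D.stdDiscarded X \ X)

/-- The partially acyclic range of `X`. -/
noncomputable def pRange (X : Set α) : Interp α := mkInterp X (D.pDiscarded X \ X)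

/-- The acyclic range of `X`. -/
noncomputable def aRange (X : Set α) : Interp α := mkInterp X (D.aDiscarded X \ X)

/-- Conflict-freeness in an ADF. -/
def ConflictFree (X : Set α) : Prop := ∀ s ∈ X, D.C s (X ∩ D.par s) = true

/-- pd-acyclic conflict-freeness in an ADF. -/
def PDAcyclicCF (X : Set α) : Prop :=
  ∀ a ∈ X, ∃ G B, D.AcyclicEval X a G B ∧ B ∩ X = ∅

def CCAdmissible (X : Set α) : Prop :=
  D.ConflictFree X ∧ ∀ e ∈ X, D.DecisivelyIn (D.stdRange X) e

def CA2Admissible (X : Set α) : Prop :=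
  D.ConflictFree X ∧ ∀ e ∈ X, D.DecisivelyIn (D.pRange X) e

def AAAdmissible (X : Set α) : Prop :=
  D.PDAcyclicCF X ∧ ∀ e ∈ X, D.DecisivelyIn (D.aRange X) e

def CCComplete (X : Set α) : Prop :=
  D.CCAdmissible X ∧ ∀ e, D.DecisivelyIn (D.stdRange X) e → e ∈ X

def CA2Complete (X : Set α) : Prop :=
  D.CA2Admissible X ∧ ∀ e, D.DecisivelyIn (D.pRange X) e → e ∈ X

def AAComplete (X : Set α) : Prop :=
  D.AAAdmissible X ∧ ∀ e, D.DecisivelyIn (D.aRange X) e → e ∈ X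

def CCPreferred (X : Set α) : Prop :=
  D.CCAdmissible X ∧ ∀ Y, D.CCAdmissible Y → X ⊆ Y → X = Y

def CA2Preferred (X : Set α) : Prop :=
  D.CA2Admissible X ∧ ∀ Y, D.CA2Admissible Y → X ⊆ Y → X = Y

def AAPreferred (X : Set α) : Prop :=
  D.AAAdmissible X ∧ ∀ Y, D.AAAdmissible Y → X ⊆ Y → X = Y

/-- `X` is a model of the ADF. -/
def IsModel (X : Set α) : Prop :=
  D.ConflictFree X ∧ ∀ a, a ∉ X → D.C a (X ∩ D.par a) = false

/-- `X` is a stable extension of the ADF. -/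
def IsStable (X : Set α) : Prop :=
  D.PDAcyclicCF X ∧ D.aDiscarded X = Xᶜ

/-- `X` is the grounded extension (the least cc-complete extension). -/
def IsGrounded (X : Set α) : Prop :=
  D.CCComplete X ∧ ∀ Y, D.CCComplete Y → X ⊆ Y

/-- `X` is the acyclic grounded extension (the least aa-complete extension). -/
def IsAcyclicGrounded (X : Set α) : Prop :=
  D.AAComplete X ∧ ∀ Y, D.AAComplete Y → X ⊆ Y

/-- The link `(r,s)` is supporting. -/
def Supporting (r s : α) : Prop :=
  ¬ ∃ R' ⊆ D.par s, D.C s R' = true ∧ D.C s (R' ∪ {r}) = false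

/-- The link `(r,s)` is attacking. -/
def Attacking (r s : α) : Prop :=
  ¬ ∃ R' ⊆ D.par s, D.C s R' = false ∧ D.C s (R' ∪ {r}) = true

/-- Bipolar ADFs. -/
def IsBADF : Prop := ∀ r s, D.L r s → D.Supporting r s ∨ D.Attacking r s

/-- Positive dependency acyclic ADFs (AADF⁺): every partially acyclic evaluation is acyclic. -/
def IsAADFplus : Prop := ∀ X x Fs G B, D.PAEval X x Fs G B → Fs = ∅

end ADF

/-! ### Frameworks with sets of attacking arguments (SETAFs) -/

/-- A framework with sets of attacking arguments. -/
structure SETAF (α : Type u) where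
  R : Set α → α → Prop
  nonempty_of_R : ∀ S a, R S a → S.Nonempty

namespace SETAF

variable (sf : SETAF α)

/-- `X` is conflict-free in the SETAF. -/
def ConflictFree (X : Set α) : Prop := ¬ ∃ S ⊆ X, ∃ a ∈ X, sf.R S a

/-- The discarded set of `X` in the SETAF. -/
def discarded (X : Set α) : Set α := {b | ∃ S ⊆ X, sf.R S b}

/-- `X` defends `a` in the SETAF. -/
def Defends (X : Set α) (a : α) : Prop :=
  ∀ S, sf.R S a → ∃ s ∈ S, s ∈ sf.discarded X

def Admissible (X : Set α) : Prop := sf.ConflictFree X ∧ ∀ a ∈ X, sf.Defends X a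

def Complete (X : Set α) : Prop := sf.Admissible X ∧ ∀ a, sf.Defends X a → a ∈ X

def Preferred (X : Set α) : Prop :=
  sf.Admissible X ∧ ∀ Y, sf.Admissible Y → X ⊆ Y → X = Y

/-- `X` is the grounded extension: the least complete extension. -/
def IsGrounded (X : Set α) : Prop := sf.Complete X ∧ ∀ Y, sf.Complete Y → X ⊆ Y

def Stable (X : Set α) : Prop := sf.ConflictFree X ∧ sf.discarded X = Xᶜ

/-- The ADF corresponding to a SETAF. -/
noncomputable def toADF : ADF α where
  L x y := ∃ B : Set α, x ∈ B ∧ sf.R B y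
  C a B := decide (¬ ∃ S, sf.R S a ∧ S ⊆ B)

end SETAF

/-! ### Extended argumentation frameworks with collective defense attacks (EAFCs) -/

/-- An EAFC: binary attacks `R` and collective defense attacks `D` on attacks. -/
structure EAFC (α : Type u) where
  R : α → α → Prop
  D : Set α → α → α → Prop
  nonempty_of_D : ∀ C a b, D C a b → C.Nonempty
  attack_of_D : ∀ C a b, D C a b → R a b

namespace EAFC

variable (E : EAFC α)

/-- `a` defeats `b` w.r.t. `X`. -/
def Defeats (X : Set α) (a b : α) : Prop :=
  E.R a b ∧ ¬ ∃ C ⊆ X, E.D C a b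

/-- `RS` is a reinstatement set on `X` for the defeat of `b` by `a`. -/
def Reinstatement (X : Set α) (RS : Set (α × α)) (a b : α) : Prop :=
  RS.Finite ∧
  (∀ p ∈ RS, p.1 ∈ X ∧ E.Defeats X p.1 p.2) ∧
  (a, b) ∈ RS ∧
  ∀ p ∈ RS, ∀ C : Set α, E.D C p.1 p.2 → ∃ q ∈ RS, q.2 ∈ C

/-- The discarded set `X⁺` of `X` in the EAFC. -/
def discarded (X : Set α) : Set α :=
  {b | ∃ a ∈ X, E.Defeats X a b ∧ ∃ RS, E.Reinstatement X RS a b}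

/-- `X` defends `a` in the EAFC. -/
def Defends (X : Set α) (a : α) : Prop :=
  ∀ b, E.Defeats X b a → b ∈ E.discarded X

/-- `X` is conflict-free in the EAFC. -/
def ConflictFree (X : Set α) : Prop := ¬ ∃ a ∈ X, ∃ b ∈ X, E.Defeats X a b

def Admissible (X : Set α) : Prop := E.ConflictFree X ∧ ∀ a ∈ X, E.Defends X a

def Complete (X : Set α) : Prop := E.Admissible X ∧ ∀ a, E.Defends X a → a ∈ X

def Preferred (X : Set α) : Prop :=
  E.Admissible X ∧ ∀ Y, E.Admissible Y → X ⊆ Y → X = Y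

def Stable (X : Set α) : Prop :=
  E.ConflictFree X ∧ ∀ b, b ∉ X → ∃ a ∈ X, E.Defeats X a b

/-- The characteristic function of the EAFC. -/
def charFun (X : Set α) : Set α := {a | E.Defends X a}

/-- The grounded extension of the EAFC. -/
def grounded : Set α := ⋃ i : ℕ, E.charFun^[i] ∅

/-- Every argument has finitely many attackers, every attack finitely many defense attackers. -/
def Finitary : Prop :=
  (∀ a, {b | E.R b a}.Finite) ∧ ∀ a b, {C | E.D C a b}.Finite

/-- Strong consistency of an EAFC. -/
def StronglyConsistent : Prop :=
  ¬ ∃ (x y z : α) (X : Set α), E.R x y ∧ x ∈ X ∧ E.D X z y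

/-- The EAFC is bounded hierarchical. -/
def BoundedHierarchical : Prop :=
  ∃ n : ℕ, ∃ hn : 0 < n,
    ∃ (As : Fin n → Set α) (Rs : Fin n → α → α → Prop)
      (Ds : Fin n → Set α → α → α → Prop),
      (∀ C a b, ¬ Ds ⟨n - 1, Nat.sub_lt hn one_pos⟩ C a b) ∧
      (Set.univ = ⋃ i, As i) ∧
      (∀ a b, E.R a b ↔ ∃ i, Rs i a b) ∧
      (∀ C a b, E.D C a b ↔ ∃ i, Ds i C a b) ∧
      (∀ i a b, Rs i a b → a ∈ As i ∧ b ∈ As i) ∧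
      (∀ i C a b, Ds i C a b → Rs i a b ∧
        ∃ h : (i : ℕ) + 1 < n, C ⊆ As ⟨(i : ℕ) + 1, h⟩)

/-- The ADF corresponding to a strongly consistent EAFC. -/
noncomputable def toADF : ADF α where
  L a b := E.R a b ∨ ∃ (c : α) (X : Set α), a ∈ X ∧ E.D X c b
  C a B := decide (¬ ∃ x ∈ B, E.R x a ∧ ¬ ∃ B' ⊆ B, E.D B' x a)

end EAFC

/-! ### Argumentation frameworks with necessities (AFNs) -/

/-- An AFN: binary attacks `R` and necessity relation `N`. -/
structure AFN (α : Type u) where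
  R : α → α → Prop
  N : Set α → α → Prop
  nonempty_of_N : ∀ B a, N B a → B.Nonempty

namespace AFN

variable (fn : AFN α)

/-- `G` is a powerful sequence for `a` on `X`. -/
def PowerfulSeq (X : Set α) (G : List α) (a : α) : Prop :=
  G ≠ [] ∧ (∀ b ∈ G, b ∈ X) ∧ G.getLast? = some a ∧
  ∀ i : ℕ, ∀ h : i < G.length, ∀ B : Set α, fn.N B (G.get ⟨i, h⟩) →
    ∃ j : ℕ, ∃ hj : j < G.length, j < i ∧ G.get ⟨j, hj⟩ ∈ B

/-- `a` is powerful in `X`. -/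
def Powerful (X : Set α) (a : α) : Prop :=
  a ∈ X ∧ ∃ G, fn.PowerfulSeq X G a

/-- `X` is coherent. -/
def Coherent (X : Set α) : Prop := ∀ a ∈ X, fn.Powerful X a

/-- The discarded set `X^att` of `X` in the AFN. -/
def discardedAtt (X : Set α) : Set α :=
  {a | ∀ C, fn.Coherent C → a ∈ C → ∃ c ∈ C, ∃ e ∈ X, fn.R e c}

/-- `X` is conflict-free in the AFN. -/
def ConflictFree (X : Set α) : Prop := ¬ ∃ a ∈ X, ∃ b ∈ X, fn.R a b

/-- `X` is strongly coherent. -/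
def StronglyCoherent (X : Set α) : Prop := fn.ConflictFree X ∧ fn.Coherent X

/-- The deactivated set `X⁺` of `X` in the AFN. -/
def deactivated (X : Set α) : Set α :=
  {a | (∃ e ∈ X, fn.R e a) ∨ ∃ B, fn.N B a ∧ X ∩ B = ∅}

/-- `X` defends `a` in the AFN. -/
def Defends (X : Set α) (a : α) : Prop :=
  fn.Coherent (X ∪ {a}) ∧ ∀ b, fn.R b a → b ∈ fn.discardedAtt X

def Admissible (X : Set α) : Prop := fn.StronglyCoherent X ∧ ∀ a ∈ X, fn.Defends X a

def Complete (X : Set α) : Prop := fn.Admissible X ∧ ∀ a, fn.Defends X a → a ∈ X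

def Preferred (X : Set α) : Prop :=
  fn.Admissible X ∧ ∀ Y, fn.Admissible Y → X ⊆ Y → X = Y

/-- `X` is the grounded extension: the least complete extension. -/
def IsGrounded (X : Set α) : Prop := fn.Complete X ∧ ∀ Y, fn.Complete Y → X ⊆ Y

/-- Stability via completeness and the deactivated set. -/
def Stable (X : Set α) : Prop := fn.Complete X ∧ fn.deactivated X = Xᶜ

/-- Stability via strong coherence and the discarded set. -/
def StableAtt (X : Set α) : Prop :=
  fn.StronglyCoherent X ∧ fn.discardedAtt X = Xᶜ

/-- Strong consistency of an AFN: no argument is both supported and attacked by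
the same argument. -/
def StronglyConsistent : Prop :=
  ∀ a : α, {b | ∃ B, b ∈ B ∧ fn.N B a} ∩ {b | fn.R b a} = ∅

/-- The ADF corresponding to a strongly consistent AFN. -/
noncomputable def toADF : ADF α where
  L x y := fn.R x y ∨ ∃ B, x ∈ B ∧ fn.N B y
  C a P := decide (¬ ((∃ p ∈ P, fn.R p a) ∨ ∃ Z, fn.N Z a ∧ Z ∩ P = ∅))

end AFN

section SetafProof

set_option linter.unusedSectionVars false

variable {α : Type} [Fintype α] (sf : SETAF α)

lemma mem_par_of_attack {S : Set α} {e s : α} (hR : sf.R S e) (hs : s ∈ S) :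
    s ∈ sf.toADF.par e := ⟨S, hs, hR⟩

/-- `H` hits every attacker set of `e`. -/
def Hit (e : α) (H : Set α) : Prop := ∀ S, sf.R S e → (S ∩ H).Nonempty

/-- `H` is a minimal hitting set for `e`. -/
def MinHit (e : α) (H : Set α) : Prop :=
  Hit sf e H ∧ ∀ F ⊆ H, Hit sf e F → F = H

lemma hit_univ (e : α) : Hit sf e (Set.univ) := fun S hS => by
  obtain ⟨x, hx⟩ := sf.nonempty_of_R S e hS
  exact ⟨x, hx, trivial⟩

lemma exists_minHit_subset {e : α} {H : Set α} (h : Hit sf e H) :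
    ∃ H' ⊆ H, MinHit sf e H' := by
  obtain ⟨F, ⟨hFH, hFhit⟩, hmin⟩ :=
    (Finite.to_wellFoundedLT.wf).has_min {F : Set α | F ⊆ H ∧ Hit sf e F} ⟨H, subset_rfl, h⟩
  refine ⟨F, hFH, hFhit, fun G hGF hGhit => ?_⟩
  by_contra hne
  exact hmin G ⟨hGF.trans hFH, hGhit⟩ (lt_of_le_of_ne hGF hne)

lemma exists_minHit (e : α) : ∃ H, MinHit sf e H := by
  obtain ⟨H, _, hH⟩ := exists_minHit_subset sf (hit_univ sf e)
  exact ⟨H, hH⟩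

lemma tset_mkInterp_empty (F : Set α) : tset (mkInterp (∅ : Set α) F) = ∅ := by
  ext a
  simp only [tset, mkInterp, Set.mem_setOf_eq, Set.mem_empty_iff_false, if_false, iff_false]
  split <;> simp

lemma fset_mkInterp_empty (F : Set α) : fset (mkInterp (∅ : Set α) F) = F := by
  ext a
  simp only [fset, mkInterp, Set.mem_setOf_eq, Set.mem_empty_iff_false, if_false]
  split <;> simp_all

lemma evalCond_true_iff (e : α) (w : Interp α) :
    sf.toADF.evalCond e w = true ↔ ¬ ∃ S, sf.R S e ∧ S ⊆ tset w ∩ sf.toADF.par e := by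
  simp only [ADF.evalCond, SETAF.toADF, decide_eq_true_eq]

/-- Characterisation of decisive-in in the ADF of a SETAF. -/
lemma decIn_iff (v : Interp α) (e : α) :
    sf.toADF.DecisivelyIn v e ↔ ∀ S, sf.R S e → ∃ s ∈ S, v s = some false := by
  constructor
  · intro hdec S hS
    by_contra hno
    push_neg at hno
    set w : Interp α := fun a =>
      if v a = none then (if a ∈ sf.toADF.par e then some true else none) else v a with hw
    have hcomp : Completion v w (idom v ∪ sf.toADF.par e) := by
      constructor
      · ext a
        simp only [idom, Set.mem_setOf_eq, Set.mem_union, hw]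
        by_cases hva : v a = none
        · simp only [hva, if_true]
          by_cases hp : a ∈ sf.toADF.par e <;> simp [hp, hva]
        · simp [hva]
      · intro a ha
        simp only [idom, Set.mem_setOf_eq] at ha
        simp [hw, ha]
    have := hdec w hcomp
    rw [evalCond_true_iff] at this
    refine this ⟨S, hS, fun s hs => ⟨?_, mem_par_of_attack sf hS hs⟩⟩
    simp only [tset, Set.mem_setOf_eq, hw]
    by_cases hvs : v s = none
    · simp [hvs, mem_par_of_attack sf hS hs]
    · simp only [hvs, if_false]
      rcases Option.ne_none_iff_exists'.mp hvs with ⟨b, hb⟩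
      cases b
      · exact absurd hb (hno s hs)
      · exact hb
  · intro hhit w hcomp
    rw [evalCond_true_iff]
    rintro ⟨S, hS, hsub⟩
    obtain ⟨s, hsS, hsf⟩ := hhit S hS
    have hdom : s ∈ idom v := by simp [idom, hsf]
    have := hcomp.2 s hdom
    have hst : w s = some true := (hsub hsS).1
    rw [hst, hsf] at this
    simp at this

lemma decIn_iff' (v : Interp α) (e : α) :
    sf.toADF.DecisivelyIn v e ↔ Hit sf e (fset v) := by
  rw [decIn_iff]
  constructor
  · intro h S hS
    obtain ⟨s, hsS, hsf⟩ := h S hS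
    exact ⟨s, hsS, hsf⟩
  · intro h S hS
    obtain ⟨s, hsS, hsf⟩ := h S hS
    exact ⟨s, hsS, hsf⟩

/-- Characterisation of minimal decisive-in interpretations. -/
lemma minDecIn_iff (v : Interp α) (e : α) :
    sf.toADF.MinDecIn v e ↔ tset v = ∅ ∧ MinHit sf e (fset v) := by
  constructor
  · rintro ⟨hdec, hmin⟩
    have hhit : Hit sf e (fset v) := (decIn_iff' sf v e).mp hdec
    have key : ∀ F ⊆ fset v, Hit sf e F →
        tset (mkInterp (∅ : Set α) F) = tset v ∧ fset (mkInterp (∅ : Set α) F) = fset v := by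
      intro F hF hFhit
      refine hmin _ ?_ ?_ ?_
      · exact (decIn_iff' sf _ e).mpr (by rwa [fset_mkInterp_empty])
      · rw [tset_mkInterp_empty]; exact Set.empty_subset _
      · rw [fset_mkInterp_empty]; exact hF
    have h1 := key (fset v) subset_rfl hhit
    rw [tset_mkInterp_empty] at h1
    refine ⟨h1.1.symm, hhit, fun F hF hFhit => ?_⟩
    have := (key F hF hFhit).2
    rwa [fset_mkInterp_empty] at this
  · rintro ⟨htset, hhit, hminhit⟩
    refine ⟨(decIn_iff' sf v e).mpr hhit, fun w hw htw hfw => ?_⟩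
    have hfeq : fset w = fset v := hminhit _ hfw ((decIn_iff' sf w e).mp hw)
    exact ⟨by rw [htset]; exact Set.eq_empty_of_subset_empty (htset ▸ htw), hfeq⟩


noncomputable def minhit (a : α) : Set α := Classical.choose (exists_minHit sf a)

lemma minhit_spec (a : α) : MinHit sf a (minhit sf a) := Classical.choose_spec _

/-- The pd-function induced by a choice of minimal hitting sets. -/
noncomputable def pdOf (Hc : α → Set α) : α → Option (Interp α) :=
  fun a => some (mkInterp (∅ : Set α) (Hc a))

lemma pdT_pdOf (Hc : α → Set α) (a : α) : pdT (pdOf Hc) a = ∅ := by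
  ext b
  simp only [pdT, pdOf, Set.mem_setOf_eq, Option.some.injEq, Set.mem_empty_iff_false, iff_false]
  rintro ⟨v, rfl, hb⟩
  rw [tset_mkInterp_empty] at hb
  exact hb

lemma pdF_pdOf (Hc : α → Set α) (a : α) : pdF (pdOf Hc) a = Hc a := by
  ext b
  simp only [pdF, pdOf, Set.mem_setOf_eq, Option.some.injEq]
  constructor
  · rintro ⟨v, rfl, hb⟩
    rwa [fset_mkInterp_empty] at hb
  · intro hb
    exact ⟨_, rfl, by rwa [fset_mkInterp_empty]⟩

lemma maxSound_pdOf (Hc : α → Set α) (hHc : ∀ a, MinHit sf a (Hc a)) (X : Set α) :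
    sf.toADF.MaxSound X (pdOf Hc) := by
  have hsd : soundDom X (pdOf Hc) = X := by
    ext a; simp [soundDom, pdOf]
  constructor
  · intro a _
    constructor
    · rintro v hv
      rw [pdOf, Option.some.injEq] at hv
      subst hv
      refine ⟨?_, ?_⟩
      · rw [minDecIn_iff, tset_mkInterp_empty, fset_mkInterp_empty]
        exact ⟨rfl, hHc a⟩
      · rw [tset_mkInterp_empty]; exact Set.empty_subset _
    · intro h; simp [pdOf] at h
  · rintro ⟨X'', pd', _, _, hss, hsub, _⟩
    rw [hsd] at hss
    exact hss.not_subset hsub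

lemma paeval_single (Hc : α → Set α) (hHc : ∀ a, MinHit sf a (Hc a)) {X : Set α} {a : α}
    (ha : a ∈ X) : sf.toADF.PAEval X a ∅ [a] (Hc a) := by
  refine ⟨pdOf Hc, maxSound_pdOf sf Hc hHc X, ?_⟩
  refine ⟨by simp, by simp, ha, Set.empty_subset _, by simpa using ha,
    by simp, by simp [pdOf], by simp, by simp, ?_, by simp, by simp, ?_⟩
  · intro i h
    rw [pdT_pdOf]
    exact Set.empty_subset _
  · ext b
    simp [pdF_pdOf]

lemma paeval_reverse {X : Set α} {a : α} {Fs : Set α} {G : List α} {B : Set α}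
    (h : sf.toADF.PAEval X a Fs G B) : Fs = ∅ ∧ ∃ H, Hit sf a H ∧ H ⊆ B := by
  obtain ⟨pd, ⟨hpdf, _⟩, h1, h2, h3, h4, h5, h6, h7, h8, h9, h10, h11, h12, h13⟩ := h
  have key : ∀ b ∈ X, ∀ v, pd b = some v → tset v = ∅ ∧ MinHit sf b (fset v) := by
    intro b hb v hv
    have := ((hpdf b hb).1 v hv).1
    rwa [minDecIn_iff] at this
  have hFs : Fs = ∅ := by
    rw [Set.eq_empty_iff_forall_notMem]
    intro b hb
    obtain ⟨c, hc, hbc⟩ := h12 b hb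
    obtain ⟨v, hv, hbt⟩ := hbc
    have := (key c (h4 hc) v hv).1
    rw [this] at hbt
    exact hbt
  refine ⟨hFs, ?_⟩
  have hGne : G ≠ [] := by
    intro hG
    have := h8 hG
    rw [hFs] at this
    exact this
  have hlast := h9 hGne
  have haG : a ∈ G := by
    obtain ⟨hne, heq⟩ := List.mem_getLast?_eq_getLast hlast
    rw [heq]
    exact List.getLast_mem hne
  obtain ⟨v, hv⟩ := Option.ne_none_iff_exists'.mp (h7 a haG)
  have hkey := key a h3 v hv
  refine ⟨fset v, hkey.2.1, ?_⟩
  intro b hb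
  rw [h13]
  refine Set.mem_union_right _ ?_
  exact Set.mem_biUnion haG ⟨v, hv, hb⟩

lemma eval_meets {X : Set α} {a : α} {Y : Set α} {Fs : Set α} {G : List α} {B : Set α}
    (ha : a ∈ sf.discarded X) (h : sf.toADF.PAEval Y a Fs G B) : (B ∩ X).Nonempty := by
  obtain ⟨S, hSX, hR⟩ := ha
  obtain ⟨-, H, hHit, hHB⟩ := paeval_reverse sf h
  obtain ⟨s, hsS, hsH⟩ := hHit S hR
  exact ⟨s, hHB hsH, hSX hsS⟩

lemma exists_eval_avoid {X Y : Set α} {a : α} (ha : a ∉ sf.discarded X) (haY : a ∈ Y) :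
    ∃ H, sf.toADF.PAEval Y a ∅ [a] H ∧ H ∩ X = ∅ := by
  have hXc : Hit sf a Xᶜ := by
    intro S hS
    rcases Set.not_subset.mp (fun hsub => ha ⟨S, hsub, hS⟩) with ⟨s, hsS, hsX⟩
    exact ⟨s, hsS, hsX⟩
  obtain ⟨H, hHsub, hHmin⟩ := exists_minHit_subset sf hXc
  set Hc : α → Set α := Function.update (minhit sf) a H with hHc
  have hHc' : ∀ b, MinHit sf b (Hc b) := by
    intro b
    by_cases hb : b = a
    · subst hb; simpa [hHc] using hHmin
    · simpa [hHc, Function.update_of_ne hb] using minhit_spec sf b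
  refine ⟨Hc a, paeval_single sf Hc hHc' haY, ?_⟩
  have : Hc a = H := by simp [hHc]
  rw [this]
  exact Set.eq_empty_of_subset_empty fun x hx => absurd hx.2 (hHsub hx.1)

lemma stdDiscarded_eq (X : Set α) : sf.toADF.stdDiscarded X = sf.discarded X := by
  ext a
  constructor
  · intro h
    by_contra ha
    obtain ⟨H, heval, hHX⟩ := exists_eval_avoid sf ha (Set.mem_univ a)
    obtain ⟨s, hs⟩ := h ∅ [a] H heval
    rw [Set.eq_empty_iff_forall_notMem] at hHX
    exact hHX s hs
  · intro ha Fs G B h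
    exact eval_meets sf ha h

lemma pDiscarded_eq (X : Set α) : sf.toADF.pDiscarded X = sf.discarded X := by
  ext a
  constructor
  · intro h
    by_contra ha
    obtain ⟨H, heval, hHX⟩ := exists_eval_avoid sf ha (Set.mem_univ a)
    exact h ⟨∅, [a], H, heval, Set.empty_subset _, hHX⟩
  · rintro ha ⟨Fs, G, B, h, -, hBX⟩
    obtain ⟨s, hs⟩ := eval_meets sf ha h
    rw [Set.eq_empty_iff_forall_notMem] at hBX
    exact hBX s hs

lemma aDiscarded_eq (X : Set α) : sf.toADF.aDiscarded X = sf.discarded X := by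
  ext a
  constructor
  · intro h
    by_contra ha
    obtain ⟨H, heval, hHX⟩ := exists_eval_avoid sf ha (Set.mem_univ a)
    obtain ⟨s, hs⟩ := h [a] H heval
    rw [Set.eq_empty_iff_forall_notMem] at hHX
    exact hHX s hs
  · intro ha G B h
    exact eval_meets sf ha h

lemma stdRange_eq (X : Set α) :
    sf.toADF.stdRange X = mkInterp X (sf.discarded X \ X) := by
  unfold ADF.stdRange; rw [stdDiscarded_eq]

lemma pRange_eq (X : Set α) :
    sf.toADF.pRange X = mkInterp X (sf.discarded X \ X) := by
  unfold ADF.pRange; rw [pDiscarded_eq]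

lemma aRange_eq (X : Set α) :
    sf.toADF.aRange X = mkInterp X (sf.discarded X \ X) := by
  unfold ADF.aRange; rw [aDiscarded_eq]

lemma C_true_iff (s : α) (T : Set α) :
    sf.toADF.C s T = true ↔ ¬ ∃ S, sf.R S s ∧ S ⊆ T := by
  simp only [SETAF.toADF, decide_eq_true_eq]

lemma cf_iff (X : Set α) : sf.ConflictFree X ↔ sf.toADF.ConflictFree X := by
  constructor
  · intro hcf s hs
    rw [C_true_iff]
    rintro ⟨S, hR, hsub⟩
    exact hcf ⟨S, fun x hx => (hsub hx).1, s, hs, hR⟩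
  · rintro h ⟨S, hSX, a, haX, hR⟩
    have := h a haX
    rw [C_true_iff] at this
    exact this ⟨S, hR, fun x hx => ⟨hSX hx, mem_par_of_attack sf hR hx⟩⟩

lemma disc_notMem {X : Set α} (h : sf.ConflictFree X) {s : α}
    (hs : s ∈ sf.discarded X) : s ∉ X := by
  obtain ⟨S, hSX, hR⟩ := hs
  exact fun hsX => h ⟨S, hSX, s, hsX, hR⟩

lemma range_false_iff {X : Set α} (h : sf.ConflictFree X) (s : α) :
    mkInterp X (sf.discarded X \ X) s = some false ↔ s ∈ sf.discarded X := by
  unfold mkInterp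
  by_cases hsX : s ∈ X
  · simp only [hsX, if_true]
    constructor
    · intro hh; simp at hh
    · intro hd; exact absurd hsX (disc_notMem sf h hd)
  · simp only [hsX, if_false]
    by_cases hd : s ∈ sf.discarded X \ X
    · simp only [hd, if_true, true_iff]
      exact hd.1
    · simp only [hd, if_false]
      constructor
      · intro hh; simp at hh
      · intro hdd; exact absurd ⟨hdd, hsX⟩ hd

lemma decIn_range_iff {X : Set α} (hcf : sf.ConflictFree X) (e : α) :
    sf.toADF.DecisivelyIn (mkInterp X (sf.discarded X \ X)) e ↔ sf.Defends X e := by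
  rw [decIn_iff]
  constructor
  · intro h S hS
    obtain ⟨s, hsS, hsf⟩ := h S hS
    exact ⟨s, hsS, (range_false_iff sf hcf s).mp hsf⟩
  · intro h S hS
    obtain ⟨s, hsS, hsd⟩ := h S hS
    exact ⟨s, hsS, (range_false_iff sf hcf s).mpr hsd⟩

lemma pdacyclic_iff (X : Set α) : sf.ConflictFree X ↔ sf.toADF.PDAcyclicCF X := by
  constructor
  · intro hcf a ha
    have hnd : a ∉ sf.discarded X := fun hd => disc_notMem sf hcf hd ha
    obtain ⟨H, heval, hHX⟩ := exists_eval_avoid sf hnd ha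
    exact ⟨[a], H, heval, hHX⟩
  · rintro hpd ⟨S, hSX, a, haX, hR⟩
    obtain ⟨G, B, heval, hBX⟩ := hpd a haX
    obtain ⟨s, hs⟩ := eval_meets sf (X := X) ⟨S, hSX, hR⟩ heval
    rw [Set.eq_empty_iff_forall_notMem] at hBX
    exact hBX s hs

lemma adm_cc (X : Set α) : sf.Admissible X ↔ sf.toADF.CCAdmissible X := by
  constructor
  · rintro ⟨hcf, hdef⟩
    refine ⟨(cf_iff sf X).mp hcf, fun e he => ?_⟩
    rw [stdRange_eq]
    exact (decIn_range_iff sf hcf e).mpr (hdef e he)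
  · rintro ⟨hcf, hdec⟩
    have hcf' := (cf_iff sf X).mpr hcf
    refine ⟨hcf', fun e he => ?_⟩
    have := hdec e he
    rw [stdRange_eq] at this
    exact (decIn_range_iff sf hcf' e).mp this

lemma adm_ca2 (X : Set α) : sf.Admissible X ↔ sf.toADF.CA2Admissible X := by
  constructor
  · rintro ⟨hcf, hdef⟩
    refine ⟨(cf_iff sf X).mp hcf, fun e he => ?_⟩
    rw [pRange_eq]
    exact (decIn_range_iff sf hcf e).mpr (hdef e he)
  · rintro ⟨hcf, hdec⟩
    have hcf' := (cf_iff sf X).mpr hcf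
    refine ⟨hcf', fun e he => ?_⟩
    have := hdec e he
    rw [pRange_eq] at this
    exact (decIn_range_iff sf hcf' e).mp this

lemma adm_aa (X : Set α) : sf.Admissible X ↔ sf.toADF.AAAdmissible X := by
  constructor
  · rintro ⟨hcf, hdef⟩
    refine ⟨(pdacyclic_iff sf X).mp hcf, fun e he => ?_⟩
    rw [aRange_eq]
    exact (decIn_range_iff sf hcf e).mpr (hdef e he)
  · rintro ⟨hcf, hdec⟩
    have hcf' := (pdacyclic_iff sf X).mpr hcf
    refine ⟨hcf', fun e he => ?_⟩
    have := hdec e he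
    rw [aRange_eq] at this
    exact (decIn_range_iff sf hcf' e).mp this

lemma comp_cc (X : Set α) : sf.Complete X ↔ sf.toADF.CCComplete X := by
  constructor
  · rintro ⟨hadm, hcomp⟩
    refine ⟨(adm_cc sf X).mp hadm, fun e he => ?_⟩
    rw [stdRange_eq] at he
    exact hcomp e ((decIn_range_iff sf hadm.1 e).mp he)
  · rintro ⟨hadm, hcomp⟩
    have hadm' := (adm_cc sf X).mpr hadm
    refine ⟨hadm', fun e he => ?_⟩
    exact hcomp e (by rw [stdRange_eq]; exact (decIn_range_iff sf hadm'.1 e).mpr he)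

lemma comp_ca2 (X : Set α) : sf.Complete X ↔ sf.toADF.CA2Complete X := by
  constructor
  · rintro ⟨hadm, hcomp⟩
    refine ⟨(adm_ca2 sf X).mp hadm, fun e he => ?_⟩
    rw [pRange_eq] at he
    exact hcomp e ((decIn_range_iff sf hadm.1 e).mp he)
  · rintro ⟨hadm, hcomp⟩
    have hadm' := (adm_ca2 sf X).mpr hadm
    refine ⟨hadm', fun e he => ?_⟩
    exact hcomp e (by rw [pRange_eq]; exact (decIn_range_iff sf hadm'.1 e).mpr he)

lemma comp_aa (X : Set α) : sf.Complete X ↔ sf.toADF.AAComplete X := by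
  constructor
  · rintro ⟨hadm, hcomp⟩
    refine ⟨(adm_aa sf X).mp hadm, fun e he => ?_⟩
    rw [aRange_eq] at he
    exact hcomp e ((decIn_range_iff sf hadm.1 e).mp he)
  · rintro ⟨hadm, hcomp⟩
    have hadm' := (adm_aa sf X).mpr hadm
    have hcf : sf.ConflictFree X := ((adm_aa sf X).mpr hadm).1
    refine ⟨hadm', fun e he => ?_⟩
    exact hcomp e (by rw [aRange_eq]; exact (decIn_range_iff sf hcf e).mpr he)

lemma stable_model (X : Set α) : sf.Stable X ↔ sf.toADF.IsModel X := by
  constructor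
  · rintro ⟨hcf, hdisc⟩
    refine ⟨(cf_iff sf X).mp hcf, fun a haX => ?_⟩
    have had : a ∈ sf.discarded X := by rw [hdisc]; exact haX
    obtain ⟨S, hSX, hR⟩ := had
    simp only [SETAF.toADF, decide_eq_false_iff_not, not_not]
    exact ⟨S, hR, fun x hx => ⟨hSX hx, mem_par_of_attack sf hR hx⟩⟩
  · rintro ⟨hcf, hmod⟩
    have hcf' := (cf_iff sf X).mpr hcf
    refine ⟨hcf', ?_⟩
    ext s
    constructor
    · intro hs
      exact disc_notMem sf hcf' hs
    · intro hs
      have := hmod s hs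
      simp only [SETAF.toADF, decide_eq_false_iff_not, not_not] at this
      obtain ⟨S, hR, hsub⟩ := this
      exact ⟨S, fun x hx => (hsub hx).1, hR⟩

lemma stable_stable (X : Set α) : sf.Stable X ↔ sf.toADF.IsStable X := by
  unfold SETAF.Stable ADF.IsStable
  rw [aDiscarded_eq, pdacyclic_iff]

lemma pref_cc (X : Set α) : sf.Preferred X ↔ sf.toADF.CCPreferred X := by
  unfold SETAF.Preferred ADF.CCPreferred
  constructor
  · rintro ⟨h1, h2⟩
    exact ⟨(adm_cc sf X).mp h1, fun Y hY hXY => h2 Y ((adm_cc sf Y).mpr hY) hXY⟩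
  · rintro ⟨h1, h2⟩
    exact ⟨(adm_cc sf X).mpr h1, fun Y hY hXY => h2 Y ((adm_cc sf Y).mp hY) hXY⟩

lemma pref_ca2 (X : Set α) : sf.Preferred X ↔ sf.toADF.CA2Preferred X := by
  unfold SETAF.Preferred ADF.CA2Preferred
  constructor
  · rintro ⟨h1, h2⟩
    exact ⟨(adm_ca2 sf X).mp h1, fun Y hY hXY => h2 Y ((adm_ca2 sf Y).mpr hY) hXY⟩
  · rintro ⟨h1, h2⟩
    exact ⟨(adm_ca2 sf X).mpr h1, fun Y hY hXY => h2 Y ((adm_ca2 sf Y).mp hY) hXY⟩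

lemma pref_aa (X : Set α) : sf.Preferred X ↔ sf.toADF.AAPreferred X := by
  unfold SETAF.Preferred ADF.AAPreferred
  constructor
  · rintro ⟨h1, h2⟩
    exact ⟨(adm_aa sf X).mp h1, fun Y hY hXY => h2 Y ((adm_aa sf Y).mpr hY) hXY⟩
  · rintro ⟨h1, h2⟩
    exact ⟨(adm_aa sf X).mpr h1, fun Y hY hXY => h2 Y ((adm_aa sf Y).mp hY) hXY⟩

lemma grounded_cc (X : Set α) : sf.IsGrounded X ↔ sf.toADF.IsGrounded X := by
  unfold SETAF.IsGrounded ADF.IsGrounded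
  constructor
  · rintro ⟨h1, h2⟩
    exact ⟨(comp_cc sf X).mp h1, fun Y hY => h2 Y ((comp_cc sf Y).mpr hY)⟩
  · rintro ⟨h1, h2⟩
    exact ⟨(comp_cc sf X).mpr h1, fun Y hY => h2 Y ((comp_cc sf Y).mp hY)⟩

lemma grounded_aa (X : Set α) : sf.IsGrounded X ↔ sf.toADF.IsAcyclicGrounded X := by
  unfold SETAF.IsGrounded ADF.IsAcyclicGrounded
  constructor
  · rintro ⟨h1, h2⟩
    exact ⟨(comp_aa sf X).mp h1, fun Y hY => h2 Y ((comp_aa sf Y).mpr hY)⟩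
  · rintro ⟨h1, h2⟩
    exact ⟨(comp_aa sf X).mpr h1, fun Y hY => h2 Y ((comp_aa sf Y).mp hY)⟩

end SetafProof

end Dialectical

open Dialectical in
/-- full correspondence between the semantics of a SETAF (or AF) and all
three families of semantics of its corresponding ADF. -/
theorem setaf_toADF_semantics
    {α : Type} [Fintype α] (sf : SETAF α) (X : Set α) :
    (sf.ConflictFree X ↔ sf.toADF.ConflictFree X) ∧
    (sf.ConflictFree X ↔ sf.toADF.PDAcyclicCF X) ∧
    (sf.Stable X ↔ sf.toADF.IsModel X) ∧
    (sf.Stable X ↔ sf.toADF.IsStable X) ∧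
    (sf.IsGrounded X ↔ sf.toADF.IsGrounded X) ∧
    (sf.IsGrounded X ↔ sf.toADF.IsAcyclicGrounded X) ∧
    (sf.Admissible X ↔ sf.toADF.CCAdmissible X) ∧
    (sf.Admissible X ↔ sf.toADF.CA2Admissible X) ∧
    (sf.Admissible X ↔ sf.toADF.AAAdmissible X) ∧
    (sf.Preferred X ↔ sf.toADF.CCPreferred X) ∧
    (sf.Preferred X ↔ sf.toADF.CA2Preferred X) ∧
    (sf.Preferred X ↔ sf.toADF.AAPreferred X) ∧
    (sf.Complete X ↔ sf.toADF.CCComplete X) ∧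
    (sf.Complete X ↔ sf.toADF.CA2Complete X) ∧
    (sf.Complete X ↔ sf.toADF.AAComplete X) :=
  ⟨cf_iff sf X, pdacyclic_iff sf X, stable_model sf X, stable_stable sf X,
   grounded_cc sf X, grounded_aa sf X, adm_cc sf X, adm_ca2 sf X, adm_aa sf X,
   pref_cc sf X, pref_ca2 sf X, pref_aa sf X, comp_cc sf X, comp_ca2 sf X, comp_aa sf X⟩
end

section
/- Let (A, R, D) be a strongly consistent EAFC and ADF^EAFC its corresponding ADF. A set of arguments X ⊆ A is a conflict-free extension of (A, R, D) if and only if it is a conflict-free extension of ADF^EAFC. -/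
open Classical

universe u

open Dialectical in
/-- conflict-free extensions of a strongly consistent EAFC and of its
corresponding ADF coincide. -/
theorem eafc_toADF_conflictFree
    {α : Type} [Fintype α] (E : EAFC α) (h : E.StronglyConsistent) (X : Set α) :
    E.ConflictFree X ↔ E.toADF.ConflictFree X := by
  constructor
  · rintro hcf s hs
    simp only [EAFC.toADF, ADF.ConflictFree, decide_eq_true_eq]
    rintro ⟨x, ⟨hxX, _⟩, hRxs, hnD⟩
    exact hcf ⟨x, hxX, s, hs, hRxs, fun ⟨C, hCX, hD⟩ =>
      hnD ⟨C, fun c hc => ⟨hCX hc, Or.inr ⟨x, C, hc, hD⟩⟩, hD⟩⟩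
  · rintro hcf ⟨a, haX, b, hbX, hRab, hnD⟩
    have := hcf b hbX
    simp only [EAFC.toADF, decide_eq_true_eq] at this
    exact this ⟨a, ⟨haX, Or.inl hRab⟩, hRab,
      fun ⟨B', hB', hD⟩ => hnD ⟨B', fun c hc => (hB' hc).1, hD⟩⟩
end

section
/- Let (A, R, D) be a strongly consistent EAFC and ADF^EAFC its corresponding ADF. If X ⊆ A is a conflict-free extension of (A, R, D) (and thus of ADF^EAFC), then the discarded set X^+ of X in (A, R, D) coincides with the partially acyclic discarded set X^{p+} of X in ADF^EAFC. -/
open Classical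

universe u

namespace Dialectical

variable {α : Type u}

set_option linter.unusedSectionVars false

namespace EAFCAux

open Set

variable {α : Type} [Fintype α]

lemma mem_tset {v : Interp α} {b : α} : b ∈ tset v ↔ v b = some true := Iff.rfl

lemma mem_fset {v : Interp α} {b : α} : b ∈ fset v ↔ v b = some false := Iff.rfl

lemma mem_idom {v : Interp α} {b : α} : b ∈ idom v ↔ v b ≠ none := Iff.rfl

lemma tset_mkInterp (T F' : Set α) : tset (mkInterp T F') = T := by
  ext z
  by_cases h1 : z ∈ T
  · simp [tset, mkInterp, h1]
  · by_cases h2 : z ∈ F' <;> simp [tset, mkInterp, h1, h2]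

lemma fset_mkInterp (T F' : Set α) : fset (mkInterp T F') = F' \ T := by
  ext z
  by_cases h1 : z ∈ T
  · simp [fset, mkInterp, h1]
  · by_cases h2 : z ∈ F' <;> simp [fset, mkInterp, h1, h2]

lemma par_toADF (E : EAFC α) (a : α) :
    E.toADF.par a = {p | E.R p a ∨ ∃ (c : α) (C : Set α), p ∈ C ∧ E.D C c a} := rfl

/-- Characterization, easy direction. -/
lemma decIn_of (E : EAFC α) (v : Interp α) (a : α)
    (h : ∀ x, E.R x a → v x = some false ∨ ∃ C ⊆ tset v, E.D C x a) :
    E.toADF.DecisivelyIn v a := by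
  intro w hw
  have hsub : tset v ⊆ tset w := by
    intro c hc
    have hci : c ∈ idom v := by
      rw [mem_idom]; rw [mem_tset] at hc; simp [hc]
    have : w c = v c := hw.2 c hci
    rw [mem_tset] at hc ⊢; rw [this, hc]
  simp only [ADF.evalCond, EAFC.toADF, decide_eq_true_eq]
  rintro ⟨x, hxS, hR, hno⟩
  rcases h x hR with hf | ⟨C, hCs, hD⟩
  · have hww : w x = v x := hw.2 x (by rw [mem_idom, hf]; simp)
    have hxt : w x = some true := hxS.1
    rw [hww, hf] at hxt
    simp at hxt
  · exact hno ⟨C, fun c hc => ⟨hsub (hCs hc), Or.inr ⟨x, C, hc, hD⟩⟩, hD⟩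

/-- Characterization, hard direction (uses strong consistency). -/
lemma of_decIn (E : EAFC α) (hsc : E.StronglyConsistent) (v : Interp α) (a : α)
    (h : E.toADF.DecisivelyIn v a) :
    ∀ x, E.R x a → v x = some false ∨ ∃ C ⊆ tset v, E.D C x a := by
  intro x hR
  by_cases hf : v x = some false
  · exact Or.inl hf
  right
  set w : Interp α := fun z => if z ∈ idom v then v z else if z = x then some true
      else if z ∈ E.toADF.par a then some false else none with hwdef
  have hxpar : x ∈ E.toADF.par a := Or.inl hR
  have hcomp : Completion v w (idom v ∪ E.toADF.par a) := by
    constructor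
    · ext z
      simp only [mem_idom, Set.mem_union, hwdef]
      split_ifs with h1 h2 h3
      · tauto
      · subst h2; simp [hxpar]
      · simp [h3]
      · simp [h1, h3]
    · intro b hb
      simp only [hwdef]
      rw [if_pos hb]
  have ht := h w hcomp
  simp only [ADF.evalCond, EAFC.toADF, decide_eq_true_eq] at ht
  push_neg at ht
  have hwx : w x = some true := by
    simp only [hwdef]
    by_cases h1 : x ∈ idom v
    · rw [if_pos h1]
      rw [mem_idom] at h1
      rcases hvx : v x with _ | b
      · exact absurd hvx h1
      · cases b
        · exact absurd hvx hf
        · rfl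
    · rw [if_neg h1]; simp
  obtain ⟨B', hB'S, hD⟩ := ht x ⟨hwx, hxpar⟩ hR
  refine ⟨B', fun c hc => ?_, hD⟩
  have hcS := hB'S hc
  have hct : w c = some true := hcS.1
  simp only [hwdef] at hct
  by_cases h1 : c ∈ idom v
  · rw [if_pos h1] at hct; exact hct
  · rw [if_neg h1] at hct
    by_cases h2 : c = x
    · exact absurd ⟨x, a, x, B', hR, h2 ▸ hc, hD⟩ hsc
    · rw [if_neg h2] at hct
      split_ifs at hct <;> simp at hct

/-- Existence of a minimal decisively-in interpretation below a given one. -/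
lemma exists_min (D : ADF α) {v : Interp α} {a : α} (h : D.DecisivelyIn v a) :
    ∃ w, D.MinDecIn w a ∧ tset w ⊆ tset v ∧ fset w ⊆ fset v := by
  classical
  set P : Set (Interp α) :=
    {w | D.DecisivelyIn w a ∧ tset w ⊆ tset v ∧ fset w ⊆ fset v} with hP
  set f : Interp α → ℕ := fun w => (tset w).ncard + (fset w).ncard with hf
  have hne : (f '' P).Nonempty := ⟨f v, v, ⟨h, subset_rfl, subset_rfl⟩, rfl⟩
  obtain ⟨w, hwP, hwf⟩ := Nat.sInf_mem hne
  refine ⟨w, ⟨hwP.1, ?_⟩, hwP.2.1, hwP.2.2⟩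
  intro u hu htu hfu
  have huP : u ∈ P := ⟨hu, htu.trans hwP.2.1, hfu.trans hwP.2.2⟩
  have h1 : sInf (f '' P) ≤ f u := Nat.sInf_le ⟨u, huP, rfl⟩
  rw [← hwf] at h1
  have c1 : (tset u).ncard ≤ (tset w).ncard := Set.ncard_le_ncard htu (Set.toFinite _)
  have c2 : (fset u).ncard ≤ (fset w).ncard := Set.ncard_le_ncard hfu (Set.toFinite _)
  simp only [hf] at h1
  constructor
  · exact Set.eq_of_subset_of_ncard_le htu (by omega) (Set.toFinite _)
  · exact Set.eq_of_subset_of_ncard_le hfu (by omega) (Set.toFinite _)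

lemma allFalse_decIn (E : EAFC α) (t : α) :
    E.toADF.DecisivelyIn (mkInterp ∅ {x | E.R x t}) t := by
  apply decIn_of
  intro x hR
  left
  simp [mkInterp, hR]

/-- If `pd` assigns a minimal decisively-in interpretation to every argument,
then it is maximally sound on `univ`. -/
lemma pd_maxSound (D : ADF α) (pd : α → Option (Interp α))
    (h : ∀ t, ∃ w, pd t = some w ∧ D.MinDecIn w t) :
    D.MaxSound Set.univ pd := by
  constructor
  · intro a _
    obtain ⟨w, hw, hmin⟩ := h a
    constructor
    · intro v hv
      rw [hw] at hv
      cases hv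
      exact ⟨hmin, Set.subset_univ _⟩
    · intro hn
      rw [hw] at hn
      cases hn
  · rintro ⟨X'', pd', _, _, h3, h4, _⟩
    exact h3.2 fun z _ => ⟨Set.mem_univ z, (h z).choose_spec.1 ▸ (by simp)⟩

lemma pdT_eq (pd : α → Option (Interp α)) (t : α) (v : Interp α) (hv : pd t = some v) :
    pdT pd t = tset v := by
  ext b
  simp only [pdT, Set.mem_setOf_eq, hv]
  constructor
  · rintro ⟨v', hv', hb⟩
    cases hv'
    exact hb
  · intro hb
    exact ⟨v, rfl, hb⟩

lemma pdF_eq (pd : α → Option (Interp α)) (t : α) (v : Interp α) (hv : pd t = some v) :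
    pdF pd t = fset v := by
  ext b
  simp only [pdF, Set.mem_setOf_eq, hv]
  constructor
  · rintro ⟨v', hv', hb⟩
    cases hv'
    exact hb
  · intro hb
    exact ⟨v, rfl, hb⟩

/-- Direction ⇒: a discarded argument is in the partially acyclic discarded set. -/
lemma dir1 (E : EAFC α) (hsc : E.StronglyConsistent) (X : Set α)
    {a : α} (ha : a ∈ E.discarded X) : a ∈ E.toADF.pDiscarded X := by
  rintro ⟨Fs, G, B, ⟨pd, hms, hpa⟩, hFsX, hBX⟩
  obtain ⟨b, hbX, hdef, RS, hRS⟩ := ha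
  obtain ⟨hGF, hnd, -, -, -, hFsn, hGn, hGe, hGne, hidx, hFsT, hFsB, hB⟩ := hpa
  obtain ⟨-, hRS2, hRSmem, hRS4⟩ := hRS
  have hBfset : ∀ y, y ∈ Fs ∨ y ∈ G → pdF pd y ⊆ B := by
    intro y hy
    rw [hB]
    rcases hy with hy | hy
    · exact fun c hc => Or.inl (Set.mem_biUnion hy hc)
    · exact fun c hc => Or.inr (Set.mem_biUnion hy hc)
  have hchar : ∀ y, y ∈ Fs ∨ y ∈ G → ∀ x ∈ X, E.Defeats X x y →
      ∃ C ⊆ pdT pd y, E.D C x y := by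
    intro y hy x hx hdxy
    obtain ⟨v, hv⟩ := Option.ne_none_iff_exists'.1 (hy.elim (hFsn y) (hGn y))
    have hmin := ((hms.1 y (Set.mem_univ y)).1 v hv).1
    rcases of_decIn E hsc v y hmin.1 x hdxy.1 with hfalse | ⟨C, hC, hD⟩
    · exfalso
      have hx1 : x ∈ B := hBfset y hy (by rw [pdF_eq pd y v hv]; exact hfalse)
      have hx2 : x ∈ B ∩ X := ⟨hx1, hx⟩
      rw [hBX] at hx2
      exact hx2
    · exact ⟨C, by rw [pdT_eq pd y v hv]; exact hC, hD⟩
  have hFscase : ∀ x y, x ∈ X → E.Defeats X x y → y ∈ Fs → False := by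
    intro x y hx hdxy hyFs
    obtain ⟨C, hC, hD⟩ := hchar y (Or.inl hyFs) x hx hdxy
    exact hdxy.2 ⟨C, fun c hc => hFsX (hFsT y hyFs (hC hc)), hD⟩
  have key : ∀ i, ∀ hi : i < G.length, ∀ x y, (x, y) ∈ RS → G.get ⟨i, hi⟩ = y → False := by
    intro i
    induction i using Nat.strong_induction_on with
    | _ i IH =>
      intro hi x y hmem hget
      have hx : x ∈ X := (hRS2 (x, y) hmem).1
      have hdxy : E.Defeats X x y := (hRS2 (x, y) hmem).2
      have hyG : y ∈ G := hget ▸ G.get_mem _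
      obtain ⟨C, hC, hD⟩ := hchar y (Or.inr hyG) x hx hdxy
      obtain ⟨q, hqRS, hqC⟩ := hRS4 (x, y) hmem C hD
      have hq2 : q.2 ∈ Fs ∪ {c | ∃ j : ℕ, ∃ hj : j < G.length, j < i ∧ G.get ⟨j, hj⟩ = c} := by
        have h5 := hidx i hi
        rw [hget] at h5
        exact h5 (hC hqC)
      rcases hq2 with hq | ⟨j, hj, hji, hgj⟩
      · exact hFscase q.1 q.2 (hRS2 q hqRS).1 (hRS2 q hqRS).2 hq
      · exact IH j hji hj q.1 q.2 hqRS hgj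
  by_cases hGnil : G = []
  · exact hFscase b a hbX hdef (hGe hGnil)
  · have hlast := hGne hGnil
    have hlen : 0 < G.length := List.length_pos_iff.2 hGnil
    have hlta : G.get ⟨G.length - 1, by omega⟩ = a := by
      rw [List.getLast?_eq_getElem?] at hlast
      rw [List.getElem?_eq_getElem (by omega : G.length - 1 < G.length)] at hlast
      simpa using hlast
    exact key (G.length - 1) (by omega) b a hRSmem hlta

/-! ### The reinstatement fixpoint machinery -/

def Bad (E : EAFC α) (X : Set α) (p : α × α) : Prop :=
  p.1 ∈ X ∧ E.Defeats X p.1 p.2 ∧ ∃ RS, E.Reinstatement X RS p.1 p.2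

def Phi (E : EAFC α) (X : Set α) (P : Set (α × α)) : Set (α × α) :=
  {p | p.1 ∈ X ∧ E.Defeats X p.1 p.2 ∧ ∀ C, E.D C p.1 p.2 → ∃ q ∈ P, q.2 ∈ C}

def PhiIt (E : EAFC α) (X : Set α) (n : ℕ) : Set (α × α) := (Phi E X)^[n] Set.univ

noncomputable def rk (E : EAFC α) (X : Set α) (p : α × α) : ℕ :=
  sInf {n | p ∉ PhiIt E X n}

lemma Phi_mono (E : EAFC α) (X : Set α) {P Q : Set (α × α)} (h : P ⊆ Q) :
    Phi E X P ⊆ Phi E X Q := by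
  rintro p ⟨h1, h2, h3⟩
  exact ⟨h1, h2, fun C hC => let ⟨q, hq, hq2⟩ := h3 C hC; ⟨q, h hq, hq2⟩⟩

lemma PhiIt_succ (E : EAFC α) (X : Set α) (n : ℕ) :
    PhiIt E X (n + 1) = Phi E X (PhiIt E X n) := by
  unfold PhiIt
  rw [Function.iterate_succ_apply']

lemma bad_mem_phiIt (E : EAFC α) (X : Set α) (p : α × α) (hp : Bad E X p) (n : ℕ) :
    p ∈ PhiIt E X n := by
  induction n generalizing p with
  | zero => exact Set.mem_univ p
  | succ n IH =>
    rw [PhiIt_succ]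
    obtain ⟨h1, h2, RS, hfin, hRS2, hmem, hRS4⟩ := hp
    refine ⟨h1, h2, fun C hC => ?_⟩
    obtain ⟨q, hq, hq2⟩ := hRS4 p hmem C hC
    exact ⟨q, IH q ⟨(hRS2 q hq).1, (hRS2 q hq).2, RS, hfin, hRS2, hq, hRS4⟩, hq2⟩

lemma phiIt_antitone (E : EAFC α) (X : Set α) (n : ℕ) :
    PhiIt E X (n + 1) ⊆ PhiIt E X n := by
  induction n with
  | zero => exact fun p _ => Set.mem_univ p
  | succ n IH =>
    intro p hp
    rw [PhiIt_succ] at hp ⊢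
    exact Phi_mono E X IH hp

lemma exists_fixed (E : EAFC α) (X : Set α) :
    ∃ N, PhiIt E X (N + 1) = PhiIt E X N := by
  set g : ℕ → ℕ := fun n => (PhiIt E X n).ncard with hg
  have hne : (Set.range g).Nonempty := ⟨g 0, 0, rfl⟩
  obtain ⟨N, hN⟩ := Nat.sInf_mem hne
  refine ⟨N, Set.eq_of_subset_of_ncard_le (phiIt_antitone E X N) ?_ (Set.toFinite _)⟩
  have h1 : sInf (Set.range g) ≤ g (N + 1) := Nat.sInf_le ⟨N + 1, rfl⟩
  rw [← hN] at h1
  exact h1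

lemma notBad_exists (E : EAFC α) (X : Set α) {p : α × α} (hx : p.1 ∈ X)
    (hd : E.Defeats X p.1 p.2) (hnb : ¬ Bad E X p) : ∃ n, p ∉ PhiIt E X n := by
  by_contra hc
  push_neg at hc
  obtain ⟨N, hN⟩ := exists_fixed E X
  have hfix : Phi E X (PhiIt E X N) = PhiIt E X N := (PhiIt_succ E X N).symm.trans hN
  refine hnb ⟨hx, hd, PhiIt E X N, Set.toFinite _, ?_, hc N, ?_⟩
  · intro q hq
    rw [← hfix] at hq
    exact ⟨hq.1, hq.2.1⟩
  · intro q hq C hC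
    rw [← hfix] at hq
    exact hq.2.2 C hC

lemma rk_spec (E : EAFC α) (X : Set α) {p : α × α} (hx : p.1 ∈ X)
    (hd : E.Defeats X p.1 p.2) (hnb : ¬ Bad E X p) :
    1 ≤ rk E X p ∧ p ∉ PhiIt E X (rk E X p) ∧ p ∈ PhiIt E X (rk E X p - 1) := by
  have hne : {n | p ∉ PhiIt E X n}.Nonempty := notBad_exists E X hx hd hnb
  have hmem := Nat.sInf_mem hne
  have h0 : 0 ∉ {n | p ∉ PhiIt E X n} := fun h => h (Set.mem_univ p)
  have h1 : 1 ≤ rk E X p := by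
    rcases Nat.eq_zero_or_pos (rk E X p) with h | h
    · exact absurd (h ▸ hmem) h0
    · exact h
  refine ⟨h1, hmem, ?_⟩
  by_contra hc
  have h2 := Nat.sInf_le (show rk E X p - 1 ∈ {n | p ∉ PhiIt E X n} from hc)
  have h3 : rk E X p ≤ rk E X p - 1 := h2
  omega

lemma rank_step (E : EAFC α) (X : Set α) {x t : α} (hx : x ∈ X)
    (hd : E.Defeats X x t) (hnb : ¬ Bad E X (x, t)) :
    ∃ C, E.D C x t ∧ ∀ y' ∈ C, ∀ x', x' ∈ X → E.Defeats X x' y' →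
      ¬ Bad E X (x', y') ∧ rk E X (x', y') < rk E X (x, t) := by
  obtain ⟨h1, h2, _⟩ := rk_spec E X (p := (x, t)) hx hd hnb
  set n := rk E X (x, t) with hn
  have hnot : (x, t) ∉ Phi E X (PhiIt E X (n - 1)) := by
    rw [← PhiIt_succ]
    have he : n - 1 + 1 = n := by omega
    rw [he]
    exact h2
  simp only [Phi, Set.mem_setOf_eq] at hnot
  push_neg at hnot
  obtain ⟨C, hC, hno⟩ := hnot hx hd
  refine ⟨C, hC, fun y' hy' x' hx' hd' => ?_⟩
  have hnot2 : (x', y') ∉ PhiIt E X (n - 1) := fun hmem => hno (x', y') hmem hy'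
  constructor
  · exact fun hb => hnot2 (bad_mem_phiIt E X _ hb _)
  · have h4 : rk E X (x', y') ≤ n - 1 :=
      Nat.sInf_le (show n - 1 ∈ {m | (x', y') ∉ PhiIt E X m} from hnot2)
    omega

/-! ### The construction of the interpretations -/

def OK (E : EAFC α) (X : Set α) (t : α) : Prop := t ∈ X ∨ ¬ ∃ x', Bad E X (x', t)

noncomputable def mu (E : EAFC α) (X : Set α) (t : α) : ℕ :=
  Finset.univ.sup fun x : α =>
    if x ∈ X ∧ E.Defeats X x t ∧ ¬ Bad E X (x, t) then rk E X (x, t) else 0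

noncomputable def chD (E : EAFC α) (X : Set α) (t x : α) : Set α :=
  if h : ∃ C ⊆ X, E.D C x t then h.choose
  else if h2 : ∃ C, E.D C x t ∧ ∀ y' ∈ C, ∀ x', x' ∈ X → E.Defeats X x' y' →
      ¬ Bad E X (x', y') ∧ rk E X (x', y') < rk E X (x, t) then h2.choose
  else ∅

lemma chD_spec (E : EAFC α) {X : Set α} (hcf : E.ConflictFree X) {t x : α}
    (hx : x ∈ X) (hR : E.R x t) (hOK : OK E X t) :
    E.D (chD E X t x) x t ∧
    ∀ y ∈ chD E X t x, (t ∈ X → y ∈ X) ∧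
      (y ∈ X ∨ ((¬ ∃ x', Bad E X (x', y)) ∧ y ∉ X ∧ mu E X y < mu E X t)) := by
  unfold chD
  split_ifs with h h2
  · obtain ⟨hsub, hD⟩ := h.choose_spec
    exact ⟨hD, fun y hy => ⟨fun _ => hsub hy, Or.inl (hsub hy)⟩⟩
  · have hdef : E.Defeats X x t := ⟨hR, h⟩
    have htX : t ∉ X := fun ht => hcf ⟨x, hx, t, ht, hdef⟩
    obtain ⟨hD, hspec⟩ := h2.choose_spec
    refine ⟨hD, fun y hy => ⟨fun ht => absurd ht htX, ?_⟩⟩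
    by_cases hyX : y ∈ X
    · exact Or.inl hyX
    · right
      have hnb := hspec y hy
      have hnbad : ¬ ∃ x', Bad E X (x', y) := by
        rintro ⟨x', hb⟩
        exact (hnb x' hb.1 hb.2.1).1 hb
      refine ⟨hnbad, hyX, ?_⟩
      have hnbt : ¬ Bad E X (x, t) := by
        rcases hOK with h' | h'
        · exact absurd h' htX
        · exact fun hb => h' ⟨x, hb⟩
      have hrk1 : 1 ≤ rk E X (x, t) := (rk_spec E X (p := (x, t)) hx hdef hnbt).1
      have hle : rk E X (x, t) ≤ mu E X t := by
        have hs := Finset.le_sup (f := fun x' : α =>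
          if x' ∈ X ∧ E.Defeats X x' t ∧ ¬ Bad E X (x', t) then rk E X (x', t) else 0)
          (Finset.mem_univ x)
        have hs2 : (if x ∈ X ∧ E.Defeats X x t ∧ ¬ Bad E X (x, t) then rk E X (x, t) else 0)
            ≤ mu E X t := hs
        rwa [if_pos ⟨hx, hdef, hnbt⟩] at hs2
      have hpos : 0 < mu E X t := by omega
      have hlt : mu E X y < rk E X (x, t) := by
        rw [mu, Finset.sup_lt_iff (show (⊥ : ℕ) < rk E X (x, t) from by
          simp only [bot_eq_zero]; omega)]
        intro x' _
        split_ifs with hx'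
        · exact (hnb x' hx'.1 hx'.2.1).2
        · omega
      omega
  · exfalso
    have hdef : E.Defeats X x t := ⟨hR, h⟩
    have htX : t ∉ X := fun ht => hcf ⟨x, hx, t, ht, hdef⟩
    have hnbt : ¬ Bad E X (x, t) := by
      rcases hOK with h' | h'
      · exact absurd h' htX
      · exact fun hb => h' ⟨x, hb⟩
    exact h2 (rank_step E X hx hdef hnbt)

def attackersX (E : EAFC α) (X : Set α) (t : α) : Set α := {x | x ∈ X ∧ E.R x t}

noncomputable def Tt (E : EAFC α) (X : Set α) (t : α) : Set α :=
  ⋃ x ∈ attackersX E X t, chD E X t x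

def Ft (E : EAFC α) (X : Set α) (t : α) : Set α := {x | E.R x t ∧ x ∉ X}

noncomputable def baseV (E : EAFC α) (X : Set α) (t : α) : Interp α :=
  if OK E X t then mkInterp (Tt E X t) (Ft E X t) else mkInterp ∅ {x | E.R x t}

lemma baseV_decIn (E : EAFC α) {X : Set α} (hsc : E.StronglyConsistent)
    (hcf : E.ConflictFree X) (t : α) : E.toADF.DecisivelyIn (baseV E X t) t := by
  unfold baseV
  split_ifs with hOK
  · apply decIn_of
    intro x hR
    by_cases hx : x ∈ X
    · right
      refine ⟨chD E X t x, ?_, (chD_spec E hcf hx hR hOK).1⟩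
      rw [tset_mkInterp]
      exact Set.subset_biUnion_of_mem (u := chD E X t) ⟨hx, hR⟩
    · left
      have hnT : x ∉ Tt E X t := by
        intro hxT
        simp only [Tt, Set.mem_iUnion] at hxT
        obtain ⟨x', hx', hmem⟩ := hxT
        exact hsc ⟨x, t, x', chD E X t x', hR, hmem, (chD_spec E hcf hx'.1 hx'.2 hOK).1⟩
      show mkInterp _ _ x = some false
      simp only [mkInterp]
      rw [if_neg hnT, if_pos (show x ∈ Ft E X t from ⟨hR, hx⟩)]
  · exact allFalse_decIn E t

noncomputable def mv (E : EAFC α) (X : Set α) (hsc : E.StronglyConsistent)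
    (hcf : E.ConflictFree X) (t : α) : Interp α :=
  (exists_min E.toADF (baseV_decIn E hsc hcf t)).choose

lemma mv_spec (E : EAFC α) (X : Set α) (hsc : E.StronglyConsistent)
    (hcf : E.ConflictFree X) (t : α) :
    E.toADF.MinDecIn (mv E X hsc hcf t) t ∧
      tset (mv E X hsc hcf t) ⊆ tset (baseV E X t) ∧
      fset (mv E X hsc hcf t) ⊆ fset (baseV E X t) :=
  (exists_min E.toADF (baseV_decIn E hsc hcf t)).choose_spec

/-! ### Direction ⇐ : construction of a partially acyclic evaluation -/

lemma dir2 (E : EAFC α) (hsc : E.StronglyConsistent) (X : Set α) (hcf : E.ConflictFree X)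
    {a : α} (ha : a ∉ E.discarded X) :
    ∃ Fs G B, E.toADF.PAEval Set.univ a Fs G B ∧ Fs ⊆ X ∧ B ∩ X = ∅ := by
  classical
  set m : α → Interp α := mv E X hsc hcf with hm
  set pd : α → Option (Interp α) := fun t => some (m t) with hpd
  have hms : E.toADF.MaxSound Set.univ pd :=
    pd_maxSound E.toADF pd (fun t => ⟨m t, rfl, (mv_spec E X hsc hcf t).1⟩)
  have hpdT : ∀ t, pdT pd t = tset (m t) := fun t => pdT_eq pd t (m t) rfl
  have hpdF : ∀ t, pdF pd t = fset (m t) := fun t => pdF_eq pd t (m t) rfl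
  set dep : α → α → Prop := fun t w => w ∈ tset (m t) with hdep
  set T : Set α := {t | Relation.ReflTransGen dep a t} with hT
  have haT : a ∈ T := Relation.ReflTransGen.refl
  have hOKa : OK E X a := Or.inr (fun ⟨x, hb⟩ => ha ⟨x, hb.1, hb.2.1, hb.2.2⟩)
  have hstep : ∀ t, OK E X t → ∀ w ∈ tset (m t),
      OK E X w ∧ (t ∈ X → w ∈ X) ∧ (w ∈ X ∨ (w ∉ X ∧ mu E X w < mu E X t)) := by
    intro t hOK w hw
    have hw2 : w ∈ tset (baseV E X t) := (mv_spec E X hsc hcf t).2.1 hw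
    rw [baseV, if_pos hOK, tset_mkInterp] at hw2
    simp only [Tt, Set.mem_iUnion] at hw2
    obtain ⟨x, hx, hmem⟩ := hw2
    have hspec := (chD_spec E hcf hx.1 hx.2 hOK).2 w hmem
    refine ⟨?_, hspec.1, ?_⟩
    · rcases hspec.2 with h' | h'
      · exact Or.inl h'
      · exact Or.inr h'.1
    · rcases hspec.2 with h' | h'
      · exact Or.inl h'
      · exact Or.inr ⟨h'.2.1, h'.2.2⟩
  have hTclosed : ∀ t ∈ T, ∀ w ∈ tset (m t), w ∈ T := fun t ht w hw => ht.tail hw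
  have hTtrans : ∀ {t u}, t ∈ T → Relation.ReflTransGen dep t u → u ∈ T :=
    fun ht h => Relation.ReflTransGen.trans ht h
  have hTOK : ∀ t ∈ T, OK E X t := by
    intro t ht
    induction ht with
    | refl => exact hOKa
    | tail h1 h2 IH => exact (hstep _ IH _ h2).1
  have hXreach : ∀ t u, t ∈ T → t ∈ X → Relation.ReflTransGen dep t u → u ∈ X := by
    intro t u ht htX h
    induction h with
    | refl => exact htX
    | @tail p q h1 h2 IH =>
      exact (hstep p (hTOK p (hTtrans ht h1)) q h2).2.1 IH
  have hNoCycle : ∀ n t, mu E X t ≤ n → t ∈ T → t ∉ X → ¬ Relation.TransGen dep t t := by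
    intro n
    induction n with
    | zero =>
      intro t hmu ht htX hcyc
      obtain ⟨w, htw, hwt⟩ := (Relation.TransGen.head'_iff).mp hcyc
      rcases (hstep t (hTOK t ht) w htw).2.2 with hwX | ⟨hwX, hmul⟩
      · exact htX (hXreach w t (hTclosed t ht w htw) hwX hwt)
      · omega
    | succ n IH =>
      intro t hmu ht htX hcyc
      obtain ⟨w, htw, hwt⟩ := (Relation.TransGen.head'_iff).mp hcyc
      rcases (hstep t (hTOK t ht) w htw).2.2 with hwX | ⟨hwX, hmul⟩
      · exact htX (hXreach w t (hTclosed t ht w htw) hwX hwt)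
      · exact IH w (by omega) (hTclosed t ht w htw) hwX
          (Relation.TransGen.tail' hwt htw)
  set F : Set α := {t | t ∈ T ∧ ∃ c, c ∈ T ∧ Relation.TransGen dep c c ∧
      Relation.ReflTransGen dep c t} with hF
  have hFT : F ⊆ T := fun t ht => ht.1
  have hFX : ∀ t ∈ F, t ∈ X := by
    rintro t ⟨ht, c, hcT, hcyc, hct⟩
    have hcX : c ∈ X := by
      by_contra hc
      exact hNoCycle (mu E X c) c le_rfl hcT hc hcyc
    exact hXreach c t hcT hcX hct
  have hFclosed : ∀ t ∈ F, ∀ w ∈ tset (m t), w ∈ F := by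
    rintro t ⟨ht, c, hcT, hcyc, hct⟩ w hw
    exact ⟨hTclosed t ht w hw, c, hcT, hcyc, hct.tail hw⟩
  have hFpred : ∀ t ∈ F, ∃ b ∈ F, t ∈ tset (m b) := by
    rintro t ⟨ht, c, hcT, hcyc, hct⟩
    rcases Relation.ReflTransGen.cases_tail hct with heq | ⟨p, hcp, hpt⟩
    · obtain ⟨p, hcp, hpc⟩ := (Relation.TransGen.tail'_iff).mp hcyc
      exact ⟨p, ⟨hTtrans hcT hcp, c, hcT, hcyc, hcp⟩, by rw [heq]; exact hpc⟩
    · exact ⟨p, ⟨hTtrans hcT hcp, c, hcT, hcyc, hcp⟩, hpt⟩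
  have hfsetX : ∀ t ∈ T, ∀ c ∈ fset (m t), c ∉ X := by
    intro t ht c hc
    have hc2 : c ∈ fset (baseV E X t) := (mv_spec E X hsc hcf t).2.2 hc
    rw [baseV, if_pos (hTOK t ht), fset_mkInterp] at hc2
    exact hc2.1.2
  have hanF : ∀ g ∈ T, a ∈ tset (m g) → a ∈ F := by
    intro g hg hag
    exact ⟨haT, a, haT, Relation.TransGen.tail' hg hag, Relation.ReflTransGen.refl⟩
  by_cases haF : a ∈ F
  · -- a lies on / after a cycle: take `G = []`, `Fs = F`
    refine ⟨F, [], (⋃ t ∈ F, pdF pd t) ∪ ⋃ t ∈ {c | c ∈ ([] : List α)}, pdF pd t,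
      ⟨pd, hms, ?_, List.nodup_nil, Set.mem_univ a, Set.subset_univ _, ?_, ?_, ?_,
        fun _ => haF, fun h => absurd rfl h, ?_, ?_, ?_, rfl⟩,
      fun t ht => hFX t ht, ?_⟩
    · intro g hg
      simp at hg
    · intro g hg
      simp at hg
    · exact fun t _ => by simp [hpd]
    · exact fun t ht => by simp at ht
    · intro i hi
      simp at hi
    · intro t ht
      rw [hpdT]
      exact fun w hw => hFclosed t ht w hw
    · intro t ht
      obtain ⟨b, hb, htb⟩ := hFpred t ht
      exact ⟨b, hb, by rw [hpdT]; exact htb⟩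
    · apply Set.eq_empty_iff_forall_notMem.2
      rintro c ⟨hcB, hcX⟩
      rcases hcB with hcB | hcB
      · simp only [Set.mem_iUnion] at hcB
        obtain ⟨t, htF, hc⟩ := hcB
        rw [hpdF] at hc
        exact hfsetX t (hFT htF) c hc hcX
      · simp at hcB
  · -- a is not in the cyclic part: topologically sort the acyclic part
    set hgt : α → ℕ := fun t =>
      (Finset.univ.filter (fun u => u ∈ T ∧ u ∉ F ∧ Relation.TransGen dep t u)).card
      with hhgt
    have hdecr : ∀ t, t ∈ T → t ∉ F → ∀ w ∈ tset (m t), w ∉ F → hgt w < hgt t := by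
      intro t ht htF w hw hwF
      have hwT : w ∈ T := hTclosed t ht w hw
      apply Finset.card_lt_card
      constructor
      · intro u hu
        simp only [Finset.mem_filter, Finset.mem_univ, true_and] at hu ⊢
        exact ⟨hu.1, hu.2.1, Relation.TransGen.head hw hu.2.2⟩
      · intro hsub
        have hwmem : w ∈ Finset.univ.filter
            (fun u => u ∈ T ∧ u ∉ F ∧ Relation.TransGen dep t u) := by
          simp only [Finset.mem_filter, Finset.mem_univ, true_and]
          exact ⟨hwT, hwF, Relation.TransGen.single hw⟩
        have := hsub hwmem
        simp only [Finset.mem_filter, Finset.mem_univ, true_and] at this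
        exact hwF ⟨hwT, w, hwT, this.2.2, Relation.ReflTransGen.refl⟩
    set Wfin : Finset α := Finset.univ.filter (fun t => t ∈ T ∧ t ∉ F ∧ t ≠ a) with hWfin
    set le : α → α → Bool := fun u v => decide (hgt u ≤ hgt v) with hle
    set L : List α := Wfin.toList.mergeSort le with hL
    have hperm : L.Perm Wfin.toList := List.mergeSort_perm Wfin.toList le
    have hmemL : ∀ u, u ∈ L ↔ (u ∈ T ∧ u ∉ F ∧ u ≠ a) := by
      intro u
      rw [hperm.mem_iff, Finset.mem_toList, hWfin]
      simp
    have hndL : L.Nodup := hperm.nodup_iff.2 Wfin.nodup_toList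
    have hsorted : L.Pairwise (fun u v => le u v = true) := by
      rw [hL]
      apply List.pairwise_mergeSort
      · intro b c d hbc hcd
        simp only [hle, decide_eq_true_eq] at hbc hcd ⊢
        omega
      · intro b c
        simp only [hle, Bool.or_eq_true, decide_eq_true_eq]
        omega
    set G : List α := L ++ [a] with hG
    have hlenG : G.length = L.length + 1 := by simp [hG]
    have haL : a ∉ L := fun h => ((hmemL a).1 h).2.2 rfl
    have hndG : G.Nodup := by
      rw [hG, List.nodup_append]
      exact ⟨hndL, List.nodup_singleton a, by
        intro u hu _ hua
        simp only [List.mem_singleton] at hua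
        exact hua ▸ ((hmemL u).1 hu).2.2⟩
    have hGT : ∀ g ∈ G, g ∈ T := by
      intro g hg
      rw [hG, List.mem_append] at hg
      rcases hg with hg | hg
      · exact ((hmemL g).1 hg).1
      · simp only [List.mem_singleton] at hg
        exact hg ▸ haT
    have hGnF : ∀ g ∈ G, g ∉ F := by
      intro g hg
      rw [hG, List.mem_append] at hg
      rcases hg with hg | hg
      · exact ((hmemL g).1 hg).2.1
      · simp only [List.mem_singleton] at hg
        exact hg ▸ haF
    refine ⟨F, G, (⋃ t ∈ F, pdF pd t) ∪ ⋃ t ∈ {c | c ∈ G}, pdF pd t,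
      ⟨pd, hms, hGnF, hndG, Set.mem_univ a, Set.subset_univ _,
        fun g _ => Set.mem_univ g, fun t _ => by simp [hpd],
        fun g _ => by simp [hpd], ?_, ?_, ?_, ?_, ?_, rfl⟩,
      fun t ht => hFX t ht, ?_⟩
    · intro hnil
      rw [hG] at hnil
      simp at hnil
    · intro _
      rw [hG]
      exact List.getLast?_concat
    · -- the ordering condition
      intro i hi
      rw [hpdT]
      intro w hw
      set g : α := G.get ⟨i, hi⟩ with hg
      have hgG : g ∈ G := G.get_mem _
      have hgT : g ∈ T := hGT g hgG
      have hwT : w ∈ T := hTclosed g hgT w hw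
      by_cases hwF : w ∈ F
      · exact Or.inl hwF
      right
      have hwa : w ≠ a := by
        intro he
        exact haF (hanF g hgT (he ▸ hw))
      have hwL : w ∈ L := (hmemL w).2 ⟨hwT, hwF, hwa⟩
      obtain ⟨⟨j, hj⟩, hLj⟩ := List.mem_iff_get.mp hwL
      have hjG : j < G.length := by omega
      have hGj : G.get ⟨j, hjG⟩ = w := by
        rw [← hLj]
        simp only [List.get_eq_getElem]
        exact List.getElem_append_left hj
      refine ⟨j, hjG, ?_, hGj⟩
      by_cases hiL : i < L.length
      · -- g is in L at position i
        have hgi : L.get ⟨i, hiL⟩ = g := by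
          rw [hg]
          simp only [List.get_eq_getElem]
          exact (List.getElem_append_left hiL).symm
        have hgF : g ∉ F := hGnF g hgG
        have hlt : hgt w < hgt g := hdecr g hgT hgF w hw hwF
        by_contra hji
        push_neg at hji
        rcases Nat.lt_or_ge i j with hij | hij
        · have hpw := List.pairwise_iff_get.mp hsorted ⟨i, hiL⟩ ⟨j, hj⟩ hij
          rw [hgi, hLj] at hpw
          simp only [hle, decide_eq_true_eq] at hpw
          omega
        · have hfin : (⟨i, hiL⟩ : Fin L.length) = ⟨j, hj⟩ := by
            simp only [Fin.mk.injEq]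
            omega
          have hgw : g = w := by rw [← hgi, hfin, hLj]
          exact hwF ⟨hwT, w, hwT, Relation.TransGen.single (hgw ▸ hw),
            Relation.ReflTransGen.refl⟩
      · -- g = a, the last element
        omega
    · intro t ht
      rw [hpdT]
      exact fun w hw => hFclosed t ht w hw
    · intro t ht
      obtain ⟨b, hb, htb⟩ := hFpred t ht
      exact ⟨b, hb, by rw [hpdT]; exact htb⟩
    · apply Set.eq_empty_iff_forall_notMem.2
      rintro c ⟨hcB, hcX⟩
      rcases hcB with hcB | hcB
      · simp only [Set.mem_iUnion] at hcB
        obtain ⟨t, htF, hc⟩ := hcB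
        rw [hpdF] at hc
        exact hfsetX t (hFT htF) c hc hcX
      · simp only [Set.mem_iUnion] at hcB
        obtain ⟨t, htG, hc⟩ := hcB
        rw [hpdF] at hc
        exact hfsetX t (hGT t htG) c hc hcX

end EAFCAux
end Dialectical
open Dialectical in
/-- for a conflict-free `X`, the EAFC discarded set `X⁺` coincides with
the partially acyclic discarded set `X^{p+}` of the corresponding ADF. -/
theorem eafc_toADF_discarded
    {α : Type} [Fintype α] (E : EAFC α) (h : E.StronglyConsistent)
    (X : Set α) (hcf : E.ConflictFree X) :
    E.discarded X = E.toADF.pDiscarded X := by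
  ext a
  constructor
  · exact fun ha => Dialectical.EAFCAux.dir1 E h X ha
  · intro hp
    by_contra hnd
    obtain ⟨Fs, G, B, hpa, hFs, hB⟩ := Dialectical.EAFCAux.dir2 E h X hcf hnd
    exact hp ⟨Fs, G, B, hpa, hFs, hB⟩
end

section
/- Let (A, R, D) be a strongly consistent EAFC and ADF^EAFC its corresponding ADF. A conflict-free set of arguments X ⊆ A defends an argument a ∈ A in (A, R, D) if and only if a is decisively in w.r.t. the partially acyclic range v_X^p of X in ADF^EAFC. -/
open Classical

universe u

namespace Dialectical

variable {α : Type u}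

/-! ### Auxiliary development for Statement 12 -/

namespace EAFCPf

variable {α : Type} [Fintype α]

lemma interp_ext {v w : Interp α} (ht : tset v = tset w) (hf : fset v = fset w) : v = w := by
  funext a
  have h1 : (a ∈ tset v) = (a ∈ tset w) := by rw [ht]
  have h2 : (a ∈ fset v) = (a ∈ fset w) := by rw [hf]
  simp only [tset, fset, Set.mem_setOf_eq, eq_iff_iff] at h1 h2
  rcases hv : v a with _ | b
  · rcases hw : w a with _ | c
    · rfl
    · cases c
      · simp [hv, hw] at h2
      · simp [hv, hw] at h1
  · cases b
    · simp only [hv, true_iff, iff_true] at h2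
      rw [h2]
    · simp only [hv, true_iff, iff_true] at h1
      rw [h1]

lemma idom_eq (v : Interp α) : idom v = tset v ∪ fset v := by
  ext a
  simp only [idom, tset, fset, Set.mem_setOf_eq, Set.mem_union]
  rcases h : v a with _ | b
  · simp
  · cases b <;> simp

lemma tset_mkInterp (T F' : Set α) : tset (mkInterp T F') = T := by
  ext a; simp only [tset, mkInterp, Set.mem_setOf_eq]
  by_cases hT : a ∈ T <;> by_cases hF : a ∈ F' <;> simp [hT, hF]

lemma fset_mkInterp (T F' : Set α) : fset (mkInterp T F') = F' \ T := by
  ext a; simp only [fset, mkInterp, Set.mem_setOf_eq]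
  by_cases hT : a ∈ T <;> by_cases hF : a ∈ F' <;> simp [hT, hF]

variable (E : EAFC α)

lemma D_subset_par {C : Set α} {x b : α} (hD : E.D C x b) : C ⊆ E.toADF.par b := by
  intro c hc
  exact Or.inr ⟨x, C, hc, hD⟩

lemma R_mem_par {x b : α} (hR : E.R x b) : x ∈ E.toADF.par b := Or.inl hR

lemma evalCond_true_iff (s : α) (w : Interp α) :
    E.toADF.evalCond s w = true ↔
      ¬ ∃ x ∈ tset w ∩ E.toADF.par s, E.R x s ∧
        ¬ ∃ B' ⊆ tset w ∩ E.toADF.par s, E.D B' x s := by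
  simp only [ADF.evalCond, EAFC.toADF, decide_eq_true_eq]

/-- Characterisation of decisive in-ness in the ADF of a strongly consistent EAFC. -/
lemma decIn_iff (h : E.StronglyConsistent) (v : Interp α) (a : α) :
    E.toADF.DecisivelyIn v a ↔
      ∀ x, E.R x a → v x = some false ∨ ∃ C ⊆ tset v, E.D C x a := by
  constructor
  · intro hdec x hx
    by_cases hvx : v x = some false
    · exact Or.inl hvx
    refine Or.inr ?_
    by_contra hC
    push_neg at hC
    -- build a completion making x true
    set w : Interp α := fun y =>
      if y ∈ idom v then v y else if y = x then some true
      else if y ∈ E.toADF.par a then some false else none with hw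
    have hxpar : x ∈ E.toADF.par a := R_mem_par E hx
    have hcomp : Completion v w (idom v ∪ E.toADF.par a) := by
      constructor
      · ext y
        simp only [Set.mem_union]
        by_cases hy : y ∈ idom v
        · have hwy : w y = v y := by simp only [hw]; exact if_pos hy
          constructor
          · intro _; exact Or.inl hy
          · intro _; show w y ≠ none; rw [hwy]; exact hy
        · have h1 : w y = if y = x then some true
              else if y ∈ E.toADF.par a then some false else none := by
            simp only [hw]; exact if_neg hy
          by_cases hyx : y = x
          · subst hyx
            have hwy : w y = some true := by rw [h1, if_pos rfl]
            exact ⟨fun _ => Or.inr hxpar, fun _ => by show w y ≠ none; simp [hwy]⟩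
          · have h2 : w y = if y ∈ E.toADF.par a then some false else none := by
              rw [h1, if_neg hyx]
            by_cases hyp : y ∈ E.toADF.par a
            · have hwy : w y = some false := by rw [h2, if_pos hyp]
              exact ⟨fun _ => Or.inr hyp, fun _ => by show w y ≠ none; simp [hwy]⟩
            · have hwy : w y = none := by rw [h2, if_neg hyp]
              constructor
              · intro hc; exact absurd hwy hc
              · rintro (hc | hc)
                · exact absurd hc hy
                · exact absurd hc hyp
      · intro y hy
        simp only [hw]; exact if_pos hy
    have := hdec w hcomp
    rw [evalCond_true_iff] at this
    apply this
    have hxt : x ∈ tset w := by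
      simp only [tset, Set.mem_setOf_eq, hw]
      by_cases hy : x ∈ idom v
      · simp only [if_pos hy]
        simp only [idom, Set.mem_setOf_eq] at hy
        rcases h' : v x with _ | b
        · exact absurd h' hy
        · cases b
          · exact absurd h' hvx
          · rfl
      · simp [hy]
    refine ⟨x, ⟨hxt, hxpar⟩, hx, ?_⟩
    rintro ⟨B', hB'sub, hB'D⟩
    -- strong consistency: members of B' do not attack a, so x ∉ B'
    have hxnB' : x ∉ B' := by
      intro hxB'
      exact h ⟨x, a, x, B', hx, hxB', hB'D⟩
    -- B' ⊆ tset v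
    have hB'v : B' ⊆ tset v := by
      intro c hc
      have hct : c ∈ tset w := (hB'sub hc).1
      simp only [tset, Set.mem_setOf_eq, hw] at hct
      by_cases hcid : c ∈ idom v
      · simp only [if_pos hcid] at hct
        exact hct
      · simp only [if_neg hcid] at hct
        by_cases hcx : c = x
        · exact absurd (hcx ▸ hc) hxnB'
        · simp only [if_neg hcx] at hct
          by_cases hcp : c ∈ E.toADF.par a <;> simp [hcp] at hct
    exact hC B' hB'v hB'D
  · intro hch w hcomp
    rw [evalCond_true_iff]
    rintro ⟨x, ⟨hxt, hxp⟩, hxR, hnB⟩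
    have htv : tset v ⊆ tset w := by
      intro c hc
      have hcid : c ∈ idom v := by
        simp only [idom, Set.mem_setOf_eq]
        simp only [tset, Set.mem_setOf_eq] at hc
        simp [hc]
      have := hcomp.2 c hcid
      simp only [tset, Set.mem_setOf_eq] at hc ⊢
      rw [this, hc]
    rcases hch x hxR with hf | ⟨C, hCsub, hCD⟩
    · have hcid : x ∈ idom v := by
        simp only [idom, Set.mem_setOf_eq, hf]
        simp
      have := hcomp.2 x hcid
      rw [hf] at this
      simp only [tset, Set.mem_setOf_eq] at hxt
      rw [hxt] at this
      exact absurd this (by simp)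
    · exact hnB ⟨C, fun c hc => ⟨htv (hCsub hc), D_subset_par E hCD hc⟩, hCD⟩

lemma pRange_tset (X : Set α) : tset (E.toADF.pRange X) = X := by
  simp [ADF.pRange, tset_mkInterp]

lemma pRange_false_iff (X : Set α) (x : α) :
    E.toADF.pRange X x = some false ↔ x ∈ E.toADF.pDiscarded X ∧ x ∉ X := by
  simp only [ADF.pRange, mkInterp]
  by_cases hx : x ∈ X
  · simp [hx]
  · by_cases hd : x ∈ E.toADF.pDiscarded X \ X
    · simp only [if_neg hx, if_pos hd]
      simp only [Set.mem_diff] at hd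
      simp [hd.1, hx]
    · simp only [if_neg hx, if_neg hd]
      simp only [Set.mem_diff] at hd
      constructor
      · intro h'; exact absurd h' (by simp)
      · intro ⟨h1, h2⟩; exact absurd ⟨h1, h2⟩ hd

lemma not_mem_of_discarded {X : Set α} (hcf : E.ConflictFree X) {b : α}
    (hb : b ∈ E.discarded X) : b ∉ X := by
  rintro hbX
  obtain ⟨a, haX, hdef, -⟩ := hb
  exact hcf ⟨a, haX, b, hbX, hdef⟩

lemma pdT_eq {pd : α → Option (Interp α)} {y : α} {v : Interp α} (hv : pd y = some v) :
    pdT pd y = tset v := by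
  ext c
  simp only [pdT, Set.mem_setOf_eq, hv]
  constructor
  · rintro ⟨v', hv', hc⟩
    cases hv'
    exact hc
  · intro hc; exact ⟨v, rfl, hc⟩

lemma pdF_eq {pd : α → Option (Interp α)} {y : α} {v : Interp α} (hv : pd y = some v) :
    pdF pd y = fset v := by
  ext c
  simp only [pdF, Set.mem_setOf_eq, hv]
  constructor
  · rintro ⟨v', hv', hc⟩
    cases hv'
    exact hc
  · intro hc; exact ⟨v, rfl, hc⟩

/-- Forward bridging lemma. -/
lemma mem_pDiscarded_of_discarded (h : E.StronglyConsistent) {X : Set α}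
    (hcf : E.ConflictFree X) {b : α}
    (hb : b ∈ E.discarded X) : b ∈ E.toADF.pDiscarded X := by
  obtain ⟨a0, ha0X, hdef0, RS, hRS⟩ := hb
  rintro ⟨Fs, G, B, ⟨pd, hms, heval⟩, hFsX, hBX⟩
  obtain ⟨hdisj, hnodup, -, -, -, hFspd, hGpd, hGnil, hGlast, hGstep, hFsT, hFsused,
    hBdef⟩ := heval
  have hpdf := hms.1
  -- any RS-pair whose target is in Fs yields a contradiction with conflict-freeness
  have hFscase : ∀ q ∈ RS, q.2 ∈ Fs → False := by
    intro q hq hqFs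
    have hqp := hRS.2.1 q hq
    exact hcf ⟨q.1, hqp.1, q.2, hFsX hqFs, hqp.2⟩
  -- main claim by strong induction on the position in G
  have claim : ∀ i : ℕ, ∀ hi : i < G.length, ∀ q ∈ RS, q.2 = G.get ⟨i, hi⟩ → False := by
    intro i
    induction i using Nat.strong_induction_on with
    | _ i ih =>
      intro hi q hq hq2
      set y := G.get ⟨i, hi⟩ with hy
      have hqp := hRS.2.1 q hq
      have hdefq : E.Defeats X q.1 y := hq2 ▸ hqp.2
      have hyG : y ∈ G := List.get_mem G _
      obtain ⟨v, hv⟩ : ∃ v, pd y = some v := by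
        rcases hw : pd y with _ | v
        · exact absurd hw (hGpd y hyG)
        · exact ⟨v, rfl⟩
      have hmin := (hpdf y (Set.mem_univ y)).1 v hv
      have hdec : E.toADF.DecisivelyIn v y := hmin.1.1
      rcases (decIn_iff E h v y).1 hdec q.1 hdefq.1 with hf | ⟨C, hCsub, hCD⟩
      · -- q.1 ∈ fset v ⊆ B, but q.1 ∈ X
        have hq1B : q.1 ∈ B := by
          rw [hBdef]
          right
          exact Set.mem_biUnion hyG (by rw [pdF_eq hv]; exact hf)
        have : q.1 ∈ B ∩ X := ⟨hq1B, hqp.1⟩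
        rw [hBX] at this
        exact this
      · -- use the reinstatement property
        obtain ⟨q', hq', hq'2⟩ := hRS.2.2.2 q hq C (by rw [← hq2] at hCD; exact hCD)
        have : q'.2 ∈ tset v := hCsub hq'2
        rw [← pdT_eq hv] at this
        rcases hGstep i hi this with hFsmem | ⟨j, hj, hji, hjq⟩
        · exact hFscase q' hq' hFsmem
        · exact ih j hji hj q' hq' hjq.symm
  by_cases hG : G = []
  · exact hFscase (a0, b) hRS.2.2.1 (hGnil hG)
  · have hGne : G ≠ [] := hG
    have hbG : b ∈ G := by
      have h1 := hGlast hGne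
      have h2 : b ∈ G.getLast? := by rw [h1]; rfl
      obtain ⟨h3, h4⟩ := List.mem_getLast?_eq_getLast h2
      rw [h4]
      exact List.getLast_mem h3
    obtain ⟨n, hn⟩ := List.mem_iff_get.1 hbG
    exact claim n.1 n.2 (a0, b) hRS.2.2.1 hn.symm

/-! #### The `Good` hierarchy -/

/-- Iterated approximation of the set of "constructible" arguments outside `X`. -/
def GoodN (X : Set α) : ℕ → Set α
  | 0 => ∅
  | n+1 => {y | y ∉ X ∧ ∀ x, E.R x y → x ∉ X ∨ (∃ C ⊆ X, E.D C x y) ∨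
      ∃ C, E.D C x y ∧ (∀ c ∈ C, c ∉ E.discarded X) ∧
        ∀ c ∈ C, c ∉ X → c ∈ GoodN X n}

def GoodStar (X : Set α) : Set α := ⋃ n, GoodN E X n

lemma goodN_mono (X : Set α) : ∀ n, GoodN E X n ⊆ GoodN E X (n+1) := by
  intro n
  induction n with
  | zero => intro y hy; exact absurd hy (by simp [GoodN])
  | succ n ih =>
    intro y hy
    obtain ⟨hyX, hy⟩ := hy
    refine ⟨hyX, fun x hx => ?_⟩
    rcases hy x hx with h1 | h2 | ⟨C, hC1, hC2, hC3⟩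
    · exact Or.inl h1
    · exact Or.inr (Or.inl h2)
    · exact Or.inr (Or.inr ⟨C, hC1, hC2, fun c hc hcX => ih (hC3 c hc hcX)⟩)

lemma goodN_le_mono (X : Set α) {m n : ℕ} (hmn : m ≤ n) :
    GoodN E X m ⊆ GoodN E X n := by
  induction n with
  | zero => rw [Nat.le_zero.1 hmn]
  | succ n ih =>
    rcases Nat.lt_succ_iff_lt_or_eq.1 (Nat.lt_succ_of_le hmn) with h1 | h1
    · exact (ih (Nat.lt_succ_iff.1 h1)).trans (goodN_mono E X n)
    · rw [h1]

/-- The level of an argument in the Good hierarchy. -/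
noncomputable def glevel (X : Set α) (g : α) : ℕ := sInf {n | g ∈ GoodN E X n}

lemma mem_goodN_glevel {X : Set α} {g : α} (hg : g ∈ GoodStar E X) :
    g ∈ GoodN E X (glevel E X g) := by
  obtain ⟨s, ⟨n, rfl⟩, hn⟩ := hg
  exact Nat.sInf_mem (⟨n, hn⟩ : {n | g ∈ GoodN E X n}.Nonempty)

lemma glevel_pos {X : Set α} {g : α} (hg : g ∈ GoodStar E X) :
    ∃ m, glevel E X g = m + 1 := by
  rcases hn : glevel E X g with _ | m
  · have := mem_goodN_glevel E hg
    rw [hn] at this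
    exact absurd this (by simp [GoodN])
  · exact ⟨m, rfl⟩

lemma goodStar_subset_goodN (X : Set α) :
    GoodStar E X ⊆ GoodN E X (Finset.univ.sup (glevel E X)) := by
  intro g hg
  exact goodN_le_mono E X (Finset.le_sup (Finset.mem_univ g)) (mem_goodN_glevel E hg)

lemma goodStar_closed {X : Set α} {y : α} (hyX : y ∉ X)
    (hy : ∀ x, E.R x y → x ∉ X ∨ (∃ C ⊆ X, E.D C x y) ∨
      ∃ C, E.D C x y ∧ (∀ c ∈ C, c ∉ E.discarded X) ∧
        ∀ c ∈ C, c ∉ X → c ∈ GoodStar E X) : y ∈ GoodStar E X := by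
  refine Set.mem_iUnion.2 ⟨Finset.univ.sup (glevel E X) + 1, hyX, fun x hx => ?_⟩
  rcases hy x hx with h1 | h2 | ⟨C, hC1, hC2, hC3⟩
  · exact Or.inl h1
  · exact Or.inr (Or.inl h2)
  · exact Or.inr (Or.inr ⟨C, hC1, hC2,
      fun c hc hcX => goodStar_subset_goodN E X (hC3 c hc hcX)⟩)

lemma mem_goodStar (X : Set α) {y : α} (hyX : y ∉ X)
    (hyd : y ∉ E.discarded X) : y ∈ GoodStar E X := by
  by_contra hyg
  -- the set of bad arguments
  set NB : Set α := {z | z ∉ X ∧ z ∉ GoodStar E X ∧ z ∉ E.discarded X} with hNB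
  have hyNB : y ∈ NB := ⟨hyX, hyg, hyd⟩
  -- witnesses for bad arguments
  have hwit : ∀ z ∈ NB, ∃ x, E.R x z ∧ x ∈ X ∧ ¬(∃ C ⊆ X, E.D C x z) ∧
      ∀ C, E.D C x z → (∃ c ∈ C, c ∈ E.discarded X) ∨
        ∃ c ∈ C, c ∉ X ∧ c ∉ GoodStar E X := by
    intro z hz
    by_contra hcon
    push_neg at hcon
    apply hz.2.1
    apply goodStar_closed E hz.1
    intro x hx
    by_cases hxX : x ∈ X
    · by_cases hCX : ∃ C ⊆ X, E.D C x z
      · exact Or.inr (Or.inl hCX)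
      · obtain ⟨C, hCD, h1, h2⟩ := hcon x hx hxX (by push_neg at hCX; exact hCX)
        exact Or.inr (Or.inr ⟨C, hCD, h1, h2⟩)
    · exact Or.inl hxX
  -- non-dependent choice of witnesses
  have hwit' : ∀ z, ∃ x, z ∈ NB → E.R x z ∧ x ∈ X ∧ ¬(∃ C ⊆ X, E.D C x z) ∧
      ∀ C, E.D C x z → (∃ c ∈ C, c ∈ E.discarded X) ∨
        ∃ c ∈ C, c ∉ X ∧ c ∉ GoodStar E X := by
    intro z
    by_cases hz : z ∈ NB
    · exact (hwit z hz).imp (fun x hx _ => hx)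
    · exact ⟨y, fun hz' => absurd hz' hz⟩
  choose xw hxw using hwit'
  have hdisc' : ∀ c, ∃ p : α × Set (α × α), c ∈ E.discarded X →
      E.Reinstatement X p.2 p.1 c := by
    intro c
    by_cases hc : c ∈ E.discarded X
    · obtain ⟨a, haX, hd, RS, hRS⟩ := hc
      exact ⟨(a, RS), fun _ => hRS⟩
    · exact ⟨(y, ∅), fun hc' => absurd hc' hc⟩
  choose dw hdw using hdisc'
  set RS : Set (α × α) := (fun z => (xw z, z)) '' NB ∪
    ⋃ c ∈ E.discarded X, (dw c).2 with hRSdef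
  -- every pair of RS has first component in X and is a defeat
  have hRSpairs : ∀ p ∈ RS, p.1 ∈ X ∧ E.Defeats X p.1 p.2 := by
    rintro p (⟨z, hz, rfl⟩ | hp)
    · obtain ⟨hR, hxX, hnC, -⟩ := hxw z hz
      exact ⟨hxX, hR, hnC⟩
    · obtain ⟨c, hc, hpc⟩ := by
        simpa using hp
      exact (hdw c hc).2.1 p hpc
  have hRSre : ∀ z ∈ NB, E.Reinstatement X RS (xw z) z := by
    intro z hz
    obtain ⟨hR, hxX, hnC, hprop⟩ := hxw z hz
    refine ⟨Set.toFinite RS, hRSpairs, Or.inl ⟨z, hz, rfl⟩, ?_⟩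
    rintro p hp C hCD
    rcases hp with ⟨z', hz', rfl⟩ | hp
    · obtain ⟨-, -, -, hprop'⟩ := hxw z' hz'
      rcases hprop' C hCD with ⟨c, hc, hcd⟩ | ⟨c, hc, hcX, hcG⟩
      · refine ⟨((dw c).1, c), Or.inr ?_, hc⟩
        exact Set.mem_biUnion hcd (hdw c hcd).2.2.1
      · by_cases hcd : c ∈ E.discarded X
        · refine ⟨((dw c).1, c), Or.inr ?_, hc⟩
          exact Set.mem_biUnion hcd (hdw c hcd).2.2.1
        · exact ⟨(xw c, c), Or.inl ⟨c, ⟨hcX, hcG, hcd⟩, rfl⟩, hc⟩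
    · obtain ⟨c, hc, hpc⟩ := by simpa using hp
      obtain ⟨q, hq, hq2⟩ := (hdw c hc).2.2.2 p hpc C hCD
      exact ⟨q, Or.inr (Set.mem_biUnion hc hq), hq2⟩
  obtain ⟨hR, hxX, hnC, -⟩ := hxw y hyNB
  exact hyd ⟨xw y, hxX, ⟨hR, hnC⟩, RS, hRSre y hyNB⟩

/-- Below any decisively-in interpretation there is a minimal one. -/
lemma exists_minDecIn {v : Interp α} {s : α} (hv : E.toADF.DecisivelyIn v s) :
    ∃ w, E.toADF.MinDecIn w s ∧ tset w ⊆ tset v ∧ fset w ⊆ fset v := by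
  set M : Set ℕ := {n | ∃ w, E.toADF.DecisivelyIn w s ∧ tset w ⊆ tset v ∧ fset w ⊆ fset v ∧
    n = (tset w).ncard + (fset w).ncard} with hM
  have hMne : M.Nonempty := ⟨_, v, hv, le_refl _, le_refl _, rfl⟩
  obtain ⟨w0, hw0dec, hw0t, hw0f, hw0n⟩ := Nat.sInf_mem hMne
  refine ⟨w0, ⟨hw0dec, ?_⟩, hw0t, hw0f⟩
  intro w' hw'dec hw't hw'f
  have hmem : (tset w').ncard + (fset w').ncard ∈ M :=
    ⟨w', hw'dec, hw't.trans hw0t, hw'f.trans hw0f, rfl⟩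
  have hle := Nat.sInf_le hmem
  rw [hw0n] at hle
  have h1 : (tset w').ncard ≤ (tset w0).ncard := Set.ncard_le_ncard hw't (Set.toFinite _)
  have h2 : (fset w').ncard ≤ (fset w0).ncard := Set.ncard_le_ncard hw'f (Set.toFinite _)
  constructor
  · exact Set.eq_of_subset_of_ncard_le hw't (by omega) (Set.toFinite _)
  · exact Set.eq_of_subset_of_ncard_le hw'f (by omega) (Set.toFinite _)

/-- Topological sorting of a finite set along a relation with well-founded
transitive closure. -/
lemma topo_sort {β : Type} (r : β → β → Prop)
    (hwf : WellFounded (Relation.TransGen r)) (S : Finset β) :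
    ∃ G : List β, G.Nodup ∧ (∀ a, a ∈ G ↔ a ∈ S) ∧
      ∀ i j (hi : i < G.length) (hj : j < G.length),
        r (G.get ⟨i, hi⟩) (G.get ⟨j, hj⟩) → i < j := by
  induction S using Finset.strongInductionOn with
  | _ S ih =>
    rcases S.eq_empty_or_nonempty with rfl | hSne
    · exact ⟨[], by simp, by simp, by simp⟩
    · obtain ⟨m, hmS, hmmin⟩ := hwf.has_min (S : Set β) (by exact_mod_cast hSne)
      obtain ⟨G', hG'nd, hG'mem, hG'ord⟩ := ih (S.erase m) (Finset.erase_ssubset hmS)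
      refine ⟨m :: G', ?_, ?_, ?_⟩
      · refine List.nodup_cons.2 ⟨fun hm => ?_, hG'nd⟩
        have := (hG'mem m).1 hm
        simp at this
      · intro a
        simp only [List.mem_cons, hG'mem, Finset.mem_erase]
        constructor
        · rintro (rfl | ⟨-, ha⟩)
          · exact hmS
          · exact ha
        · intro ha
          by_cases ham : a = m
          · exact Or.inl ham
          · exact Or.inr ⟨ham, ha⟩
      · intro i j hi hj hr
        match i, j with
        | 0, 0 =>
          simp only [List.get] at hr
          exact absurd (Relation.TransGen.single hr) (hmmin m hmS)
        | 0, j+1 => exact Nat.succ_pos j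
        | i+1, 0 =>
          simp only [List.get] at hr
          have hilt : i < G'.length := by simpa using hi
          have hmem' : G'.get ⟨i, hilt⟩ ∈ S := by
            have := (hG'mem _).1 (List.get_mem G' ⟨i, hilt⟩)
            exact Finset.mem_of_mem_erase this
          exact absurd (Relation.TransGen.single hr) (hmmin _ hmem')
        | i+1, j+1 =>
          simp only [List.get] at hr
          exact Nat.succ_lt_succ (hG'ord i j (by simpa using hi) (by simpa using hj) hr)

lemma decIn_build (h : E.StronglyConsistent) {X : Set α} (z : α) (CC : α → Set α)
    (hCC : ∀ x, E.R x z → x ∈ X → E.D (CC x) x z) :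
    E.toADF.DecisivelyIn
      (mkInterp (⋃ x ∈ {x | E.R x z ∧ x ∈ X}, CC x)
        ((⋃ x ∈ {x | E.R x z ∧ x ∈ X}, CC x) ∪ ({x | E.R x z} \ X))) z := by
  set T := ⋃ x ∈ {x | E.R x z ∧ x ∈ X}, CC x with hT
  rw [decIn_iff E h]
  intro x hx
  by_cases hxX : x ∈ X
  · refine Or.inr ⟨CC x, ?_, hCC x hx hxX⟩
    rw [tset_mkInterp]
    exact Set.subset_biUnion_of_mem (u := CC) ⟨hx, hxX⟩
  · left
    have hxT : x ∉ T := by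
      intro hxT
      rw [hT] at hxT
      obtain ⟨x', hx', hxC⟩ := by
        simpa using hxT
      exact h ⟨x, z, x', CC x', hx, hxC, hCC x' hx'.1 hx'.2⟩
    simp only [mkInterp, if_neg hxT]
    have hxm : x ∈ {x | E.R x z} \ X := ⟨hx, hxX⟩
    exact if_pos (Set.mem_union_right _ hxm)

lemma pd_X_aux (h : E.StronglyConsistent) {X : Set α} (hcf : E.ConflictFree X)
    {z : α} (hz : z ∈ X) :
    ∃ w, E.toADF.MinDecIn w z ∧ tset w ⊆ X ∧ fset w ∩ X = ∅ := by
  have hdef : ∀ x, ∃ C, E.R x z → x ∈ X → C ⊆ X ∧ E.D C x z := by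
    intro x
    by_cases hx : E.R x z ∧ x ∈ X
    · have : ¬ E.Defeats X x z := fun hd => hcf ⟨x, hx.2, z, hz, hd⟩
      simp only [EAFC.Defeats, not_and, not_not] at this
      obtain ⟨C, hC1, hC2⟩ := this hx.1
      exact ⟨C, fun _ _ => ⟨hC1, hC2⟩⟩
    · exact ⟨∅, fun h1 h2 => absurd ⟨h1, h2⟩ hx⟩
  choose CC hCC using hdef
  have hdec := decIn_build E h z CC (fun x h1 h2 => (hCC x h1 h2).2)
  obtain ⟨w, hwmin, hwt, hwf⟩ := exists_minDecIn E hdec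
  refine ⟨w, hwmin, ?_, ?_⟩
  · refine hwt.trans ?_
    rw [tset_mkInterp]
    rintro c hc
    obtain ⟨x, hx, hcx⟩ := by simpa using hc
    exact (hCC x hx.1 hx.2).1 hcx
  · rw [Set.eq_empty_iff_forall_notMem]
    rintro c ⟨hcf', hcX⟩
    have := hwf hcf'
    rw [fset_mkInterp] at this
    rcases this.1 with h1 | h1
    · exact this.2 h1
    · exact h1.2 hcX

lemma pd_good_aux (h : E.StronglyConsistent) {X : Set α}
    {z : α} (hzg : z ∈ GoodStar E X) (hzX : z ∉ X) :
    ∃ w, E.toADF.MinDecIn w z ∧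
      tset w ⊆ X ∪ {c | c ∈ GoodStar E X ∧ glevel E X c < glevel E X z} ∧
      fset w ∩ X = ∅ := by
  obtain ⟨m, hm⟩ := glevel_pos E hzg
  have hzN := mem_goodN_glevel E hzg
  rw [hm] at hzN
  obtain ⟨-, hprop⟩ := hzN
  have hdef : ∀ x, ∃ C, E.R x z → x ∈ X →
      E.D C x z ∧ ∀ c ∈ C, c ∉ X → c ∈ GoodN E X m := by
    intro x
    by_cases hx : E.R x z ∧ x ∈ X
    · rcases hprop x hx.1 with h1 | ⟨C, hC1, hC2⟩ | ⟨C, hC1, -, hC3⟩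
      · exact absurd hx.2 h1
      · exact ⟨C, fun _ _ => ⟨hC2, fun c hc hcX => absurd (hC1 hc) hcX⟩⟩
      · exact ⟨C, fun _ _ => ⟨hC1, hC3⟩⟩
    · exact ⟨∅, fun h1 h2 => absurd ⟨h1, h2⟩ hx⟩
  choose CC hCC using hdef
  have hdec := decIn_build E h z CC (fun x h1 h2 => (hCC x h1 h2).1)
  obtain ⟨w, hwmin, hwt, hwf⟩ := exists_minDecIn E hdec
  refine ⟨w, hwmin, ?_, ?_⟩
  · refine hwt.trans ?_
    rw [tset_mkInterp]
    rintro c hc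
    obtain ⟨x, hx, hcx⟩ := by simpa using hc
    by_cases hcX : c ∈ X
    · exact Or.inl hcX
    · have hcN := (hCC x hx.1 hx.2).2 c hcx hcX
      refine Or.inr ⟨Set.mem_iUnion.2 ⟨m, hcN⟩, ?_⟩
      calc glevel E X c ≤ m := Nat.sInf_le hcN
        _ < m + 1 := Nat.lt_succ_self m
        _ = glevel E X z := hm.symm
  · rw [Set.eq_empty_iff_forall_notMem]
    rintro c ⟨hcf', hcX⟩
    have := hwf hcf'
    rw [fset_mkInterp] at this
    rcases this.1 with h1 | h1
    · exact this.2 h1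
    · exact h1.2 hcX

/-- The global pd-function used in the backward construction. -/
lemma exists_pd (h : E.StronglyConsistent) {X : Set α} (hcf : E.ConflictFree X) :
    ∃ pd : α → Option (Interp α),
      E.toADF.MaxSound Set.univ pd ∧
      (∀ z ∈ X, pd z ≠ none ∧ pdT pd z ⊆ X ∧ pdF pd z ∩ X = ∅) ∧
      (∀ z, z ∈ GoodStar E X → z ∉ X → pd z ≠ none ∧
        pdT pd z ⊆ X ∪ {c | c ∈ GoodStar E X ∧ glevel E X c < glevel E X z} ∧
        pdF pd z ∩ X = ∅) := by
  set pd : α → Option (Interp α) := fun z =>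
    if hz : z ∈ X then some (pd_X_aux E h hcf hz).choose
    else if hg : z ∈ GoodStar E X then some (pd_good_aux E h hg hz).choose
    else if he : ∃ w, E.toADF.MinDecIn w z then some he.choose else none
    with hpd
  have hXval : ∀ z (hz : z ∈ X), pd z = some (pd_X_aux E h hcf hz).choose := by
    intro z hz; simp only [hpd, dif_pos hz]
  have hGval : ∀ z (hg : z ∈ GoodStar E X) (hz : z ∉ X),
      pd z = some (pd_good_aux E h hg hz).choose := by
    intro z hg hz; simp only [hpd, dif_neg hz, dif_pos hg]
  have hmin : ∀ z v, pd z = some v → E.toADF.MinDecIn v z := by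
    intro z v hv
    by_cases hz : z ∈ X
    · rw [hXval z hz] at hv
      cases hv
      exact (pd_X_aux E h hcf hz).choose_spec.1
    · by_cases hg : z ∈ GoodStar E X
      · rw [hGval z hg hz] at hv
        cases hv
        exact (pd_good_aux E h hg hz).choose_spec.1
      · simp only [hpd, dif_neg hz, dif_neg hg] at hv
        by_cases he : ∃ w, E.toADF.MinDecIn w z
        · rw [dif_pos he] at hv
          cases hv
          exact he.choose_spec
        · rw [dif_neg he] at hv
          exact absurd hv (by simp)
  have hnone : ∀ z, pd z = none → ¬ ∃ w, E.toADF.MinDecIn w z := by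
    intro z hv hex
    by_cases hz : z ∈ X
    · rw [hXval z hz] at hv; exact absurd hv (by simp)
    · by_cases hg : z ∈ GoodStar E X
      · rw [hGval z hg hz] at hv; exact absurd hv (by simp)
      · simp only [hpd, dif_neg hz, dif_neg hg] at hv
        rw [dif_pos hex] at hv
        exact absurd hv (by simp)
  refine ⟨pd, ⟨?_, ?_⟩, ?_, ?_⟩
  · -- PDFun univ
    intro a _
    refine ⟨fun v hv => ⟨hmin a v hv, Set.subset_univ _⟩, fun hv => ?_⟩
    rintro ⟨v, hvmin, -⟩
    exact hnone a hv ⟨v, hvmin⟩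
  · -- maximality
    rintro ⟨X'', pd', hpd'f, hpd's, hss, -, -⟩
    obtain ⟨a, haX'', hans⟩ := Set.exists_of_ssubset hss
    have hanone : pd a = none := by
      by_contra hne
      exact hans ⟨Set.mem_univ a, hne⟩
    rcases hw' : pd' a with _ | v
    · exact hpd's a haX'' hw'
    · exact hnone a hanone ⟨v, ((hpd'f a haX'').1 v hw').1⟩
  · intro z hz
    have hv := hXval z hz
    refine ⟨by rw [hv]; simp, ?_, ?_⟩
    · rw [pdT_eq hv]
      exact (pd_X_aux E h hcf hz).choose_spec.2.1
    · rw [pdF_eq hv]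
      exact (pd_X_aux E h hcf hz).choose_spec.2.2
  · intro z hg hz
    have hv := hGval z hg hz
    refine ⟨by rw [hv]; simp, ?_, ?_⟩
    · rw [pdT_eq hv]
      exact (pd_good_aux E h hg hz).choose_spec.2.1
    · rw [pdF_eq hv]
      exact (pd_good_aux E h hg hz).choose_spec.2.2

/-- Backward bridging lemma. -/
lemma not_pDiscarded_of_not_discarded (h : E.StronglyConsistent) {X : Set α}
    (hcf : E.ConflictFree X) {b : α} (hbX : b ∉ X) (hbd : b ∉ E.discarded X) :
    b ∉ E.toADF.pDiscarded X := by
  simp only [ADF.pDiscarded, Set.mem_setOf_eq, not_not]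
  obtain ⟨pd, hms, hXp, hGp⟩ := exists_pd E h hcf
  have hbg : b ∈ GoodStar E X := mem_goodStar E X hbX hbd
  set stp : α → α → Prop := fun u w => u ∈ pdT pd w with hstp
  set Reach : Set α := {c | Relation.ReflTransGen stp c b} with hReach
  have hbReach : b ∈ Reach := Relation.ReflTransGen.refl
  have hXT : ∀ z ∈ X, pdT pd z ⊆ X := fun z hz => (hXp z hz).2.1
  have hGT : ∀ z, z ∈ GoodStar E X → z ∉ X → pdT pd z ⊆
      X ∪ {c | c ∈ GoodStar E X ∧ glevel E X c < glevel E X z} :=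
    fun z h1 h2 => (hGp z h1 h2).2.1
  have hReachXG : ∀ c ∈ Reach, c ∈ X ∨ c ∈ GoodStar E X := by
    intro c hc
    induction hc using Relation.ReflTransGen.head_induction_on with
    | refl => exact Or.inr hbg
    | @head a' c' h' h'' ih =>
      by_cases hc' : c' ∈ X
      · exact Or.inl (hXT c' hc' h')
      · have hc'g : c' ∈ GoodStar E X := ih.resolve_left hc'
        rcases hGT c' hc'g hc' h' with h1 | h1
        · exact Or.inl h1
        · exact Or.inr h1.1
  have hReachClosed : ∀ z ∈ Reach, pdT pd z ⊆ Reach :=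
    fun z hz u hu => Relation.ReflTransGen.head hu hz
  have hL4 : ∀ u z, Relation.TransGen stp u z → z ∈ X → u ∈ X := by
    intro u z htg
    induction htg with
    | single h' => exact fun hz => hXT _ hz h'
    | tail h1 h2 ih => exact fun hz => ih (hXT _ hz h2)
  have hL3 : ∀ u z, Relation.TransGen stp u z → z ∈ GoodStar E X → z ∉ X →
      u ∈ X ∨ (u ∈ GoodStar E X ∧ glevel E X u < glevel E X z) := by
    intro u z htg
    induction htg with
    | single h' =>
      intro hg hz
      rcases hGT _ hg hz h' with h1 | h1
      · exact Or.inl h1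
      · exact Or.inr h1
    | tail h1 h2 ih =>
      intro hg hz
      rcases hGT _ hg hz h2 with hcX | ⟨hcG, hlt⟩
      · exact Or.inl (hL4 _ _ h1 hcX)
      · rename_i c _
        by_cases hcX : c ∈ X
        · exact Or.inl (hL4 _ _ h1 hcX)
        · rcases ih hcG hcX with h3 | ⟨h4, h5⟩
          · exact Or.inl h3
          · exact Or.inr ⟨h4, h5.trans hlt⟩
  have hnocycG : ∀ g, g ∈ GoodStar E X → g ∉ X → ¬ Relation.TransGen stp g g := by
    intro g hg hgX htg
    rcases hL3 g g htg hg hgX with h1 | ⟨-, h2⟩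
    · exact hgX h1
    · exact absurd h2 (lt_irrefl _)
  have hbnot : ∀ z ∈ Reach, b ∉ pdT pd z := fun z hz hb =>
    hnocycG b hbg hbX (Relation.TransGen.head' hb hz)
  -- the cyclic part
  set Fs : Set α := ⋃₀ {S | S ⊆ Reach ∩ X ∧ ∀ a ∈ S, ∃ b' ∈ S, a ∈ pdT pd b'} with hFs
  have hFsRX : Fs ⊆ Reach ∩ X := by rintro a ⟨S, hS, ha⟩; exact hS.1 ha
  have hFsused : ∀ a ∈ Fs, ∃ b' ∈ Fs, a ∈ pdT pd b' := by
    rintro a ⟨S, hS, ha⟩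
    obtain ⟨b', hb', hab⟩ := hS.2 a ha
    exact ⟨b', ⟨S, hS, hb'⟩, hab⟩
  have hFsclosed : ∀ a ∈ Fs, pdT pd a ⊆ Fs := by
    intro a ha u hu
    refine ⟨Fs ∪ ⋃ a' ∈ Fs, pdT pd a', ⟨?_, ?_⟩, Or.inr (Set.mem_biUnion ha hu)⟩
    · rintro c (hc | hc)
      · exact hFsRX hc
      · obtain ⟨a', ha', hca'⟩ := by simpa using hc
        exact ⟨hReachClosed a' (hFsRX ha').1 hca', hXT a' (hFsRX ha').2 hca'⟩
    · rintro c (hc | hc)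
      · obtain ⟨b', hb', hcb⟩ := hFsused c hc
        exact ⟨b', Or.inl hb', hcb⟩
      · obtain ⟨a', ha', hca'⟩ := by simpa using hc
        exact ⟨a', Or.inl ha', hca'⟩
  -- the acyclic part and its relation
  set RA : Set α := Reach \ Fs with hRA
  set rr : α → α → Prop := fun u z => stp u z ∧ u ∈ RA ∧ z ∈ RA with hrr
  have hmono : ∀ {x y}, Relation.TransGen rr x y → Relation.TransGen stp x y :=
    fun hxy => Relation.TransGen.mono (r := rr) (p := stp) (fun _ _ hp => hp.1) _ _ hxy
  have hirr : ∀ u, ¬ Relation.TransGen rr u u := by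
    intro u htg
    have huRA : u ∈ RA := by
      obtain ⟨c, h3, -⟩ := Relation.TransGen.head'_iff.1 htg
      exact h3.2.1
    by_cases huX : u ∈ X
    · set S : Set α := {w | Relation.TransGen rr w u ∧
        (Relation.TransGen rr u w ∨ w = u)} with hS
      have huS : u ∈ S := ⟨htg, Or.inr rfl⟩
      have hSsub : S ⊆ Reach ∩ X := by
        rintro w ⟨h1, h2⟩
        have hwRA : w ∈ RA := by
          obtain ⟨c, h3, -⟩ := Relation.TransGen.head'_iff.1 h1
          exact h3.2.1
        exact ⟨hwRA.1, hL4 w u (hmono h1) huX⟩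
      have hSprop : ∀ w ∈ S, ∃ v ∈ S, w ∈ pdT pd v := by
        rintro w ⟨h1, h2⟩
        obtain ⟨c, h3, h4⟩ := Relation.TransGen.head'_iff.1 h1
        rcases Relation.reflTransGen_iff_eq_or_transGen.1 h4 with rfl | h4'
        · exact ⟨u, huS, h3.1⟩
        · refine ⟨c, ⟨h4', Or.inl ?_⟩, h3.1⟩
          rcases h2 with h5 | rfl
          · exact h5.tail h3
          · exact Relation.TransGen.single h3
      exact huRA.2 ⟨S, ⟨hSsub, hSprop⟩, huS⟩
    · have huG : u ∈ GoodStar E X := (hReachXG u huRA.1).resolve_left huX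
      exact hnocycG u huG huX (hmono htg)
  have hwf : WellFounded (Relation.TransGen rr) := by
    have h1 : IsTrans α (Relation.TransGen rr) := ⟨fun a b c => Relation.TransGen.trans⟩
    have h2 : IsIrrefl α (Relation.TransGen rr) := ⟨hirr⟩
    exact Finite.wellFounded_of_trans_of_irrefl _
  obtain ⟨G', hG'nd, hG'mem, hG'ord⟩ :=
    topo_sort rr hwf (Set.toFinite (RA \ {b})).toFinset
  have hG'mem' : ∀ a, a ∈ G' ↔ a ∈ RA \ {b} := by
    intro a
    rw [hG'mem, Set.Finite.mem_toFinset]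
  set G : List α := G' ++ [b] with hG
  set B : Set α := (⋃ a ∈ Fs, pdF pd a) ∪ ⋃ a ∈ {c | c ∈ G}, pdF pd a with hB
  -- pd is defined on all relevant arguments, with f-sets avoiding X
  have hpdon : ∀ z, z ∈ Reach → pd z ≠ none ∧ pdF pd z ∩ X = ∅ := by
    intro z hz
    by_cases hzX : z ∈ X
    · exact ⟨(hXp z hzX).1, (hXp z hzX).2.2⟩
    · have hzg := (hReachXG z hz).resolve_left hzX
      exact ⟨(hGp z hzg hzX).1, (hGp z hzg hzX).2.2⟩
  have hGReach : ∀ a ∈ G, a ∈ Reach := by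
    intro a ha
    rcases List.mem_append.1 ha with h1 | h1
    · exact ((hG'mem' a).1 h1).1.1
    · rw [List.mem_singleton.1 h1]
      exact hbReach
  refine ⟨Fs, G, B, ⟨pd, hms, ?_⟩, fun a ha => (hFsRX ha).2, ?_⟩
  · refine ⟨?_, ?_, Set.mem_univ b, fun a _ => Set.mem_univ a, fun a _ => Set.mem_univ a,
      ?_, ?_, ?_, ?_, ?_, hFsclosed, hFsused, rfl⟩
    · -- G disjoint from Fs
      intro a ha
      rcases List.mem_append.1 ha with h1 | h1
      · exact ((hG'mem' a).1 h1).1.2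
      · rw [List.mem_singleton.1 h1]
        exact fun hb' => hbX (hFsRX hb').2
    · -- nodup
      refine List.Nodup.append hG'nd (List.nodup_singleton b) ?_
      intro a ha hb'
      rw [List.mem_singleton.1 hb'] at ha
      exact ((hG'mem' b).1 ha).2 rfl
    · exact fun a ha => (hpdon a (hFsRX ha).1).1
    · exact fun a ha => (hpdon a (hGReach a ha)).1
    · intro hGnil
      simp [hG] at hGnil
    · intro _
      rw [hG]
      exact List.getLast?_concat
    · -- the ordering condition
      intro i hi
      have hlen : G.length = G'.length + 1 := by simp [hG]
      intro u hu
      -- identify the element at position i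
      by_cases hi' : i < G'.length
      · have hzi : G.get ⟨i, hi⟩ = G'.get ⟨i, hi'⟩ := by rw [List.get_eq_getElem, List.get_eq_getElem]; exact List.getElem_append_left hi'
        set z := G'.get ⟨i, hi'⟩ with hz
        rw [hzi] at hu
        have hzRA : z ∈ RA \ {b} := (hG'mem' z).1 (List.get_mem G' ⟨i, hi'⟩)
        have hzReach : z ∈ Reach := hzRA.1.1
        have huReach : u ∈ Reach := hReachClosed z hzReach hu
        by_cases huFs : u ∈ Fs
        · exact Or.inl huFs
        · have huRA : u ∈ RA := ⟨huReach, huFs⟩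
          have hub : u ≠ b := fun he => hbnot z hzReach (he ▸ hu)
          obtain ⟨⟨j, hj⟩, hju⟩ := List.mem_iff_get.1 ((hG'mem' u).2 ⟨huRA, hub⟩)
          have hji : j < i := by
            apply hG'ord j i hj hi'
            rw [hju]
            exact ⟨hu, huRA, hzRA.1⟩
          refine Or.inr ⟨j, by omega, hji, ?_⟩
          exact (by rw [List.get_eq_getElem, List.get_eq_getElem]; exact List.getElem_append_left hj : G.get ⟨j, by omega⟩ = G'.get ⟨j, hj⟩).trans hju
      · -- i is the last position
        have hieq : i = G'.length := by
          rw [hlen] at hi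
          omega
        subst hieq
        have hzi : G.get ⟨G'.length, hi⟩ = b := by
          rw [List.get_eq_getElem]
          have h2 : (G' ++ [b])[G'.length]'(by simp) = b := by
            rw [List.getElem_append_right (Nat.le_refl G'.length)]
            simp
          exact h2
        rw [hzi] at hu
        have huReach : u ∈ Reach := hReachClosed b hbReach hu
        by_cases huFs : u ∈ Fs
        · exact Or.inl huFs
        · have huRA : u ∈ RA := ⟨huReach, huFs⟩
          have hub : u ≠ b := fun he => hbnot b hbReach (he ▸ hu)
          obtain ⟨⟨j, hj⟩, hju⟩ := List.mem_iff_get.1 ((hG'mem' u).2 ⟨huRA, hub⟩)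
          refine Or.inr ⟨j, by omega, by omega, ?_⟩
          exact (by rw [List.get_eq_getElem, List.get_eq_getElem]; exact List.getElem_append_left hj : G.get ⟨j, by omega⟩ = G'.get ⟨j, hj⟩).trans hju
  · -- B ∩ X = ∅
    rw [Set.eq_empty_iff_forall_notMem]
    rintro c ⟨hcB, hcX⟩
    rcases hcB with hc | hc
    · obtain ⟨a, ha, hca⟩ := by simpa using hc
      have := (hpdon a (hFsRX ha).1).2
      rw [Set.eq_empty_iff_forall_notMem] at this
      exact this c ⟨hca, hcX⟩
    · obtain ⟨a, ha, hca⟩ := by simpa using hc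
      have := (hpdon a (hGReach a ha)).2
      rw [Set.eq_empty_iff_forall_notMem] at this
      exact this c ⟨hca, hcX⟩

end EAFCPf

end Dialectical

open Dialectical in
/-- a conflict-free set defends `a` in a strongly consistent EAFC iff `a`
is decisively in w.r.t. the partially acyclic range of `X` in the corresponding ADF. -/
theorem eafc_toADF_defends_iff_decisivelyIn
    {α : Type} [Fintype α] (E : EAFC α) (h : E.StronglyConsistent)
    (X : Set α) (hcf : E.ConflictFree X) (a : α) :
    E.Defends X a ↔ E.toADF.DecisivelyIn (E.toADF.pRange X) a := by
  rw [EAFCPf.decIn_iff E h]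
  constructor
  · intro hdef x hx
    by_cases hdx : E.Defeats X x a
    · have hd := hdef x hdx
      left
      rw [EAFCPf.pRange_false_iff]
      exact ⟨EAFCPf.mem_pDiscarded_of_discarded E h hcf hd,
        EAFCPf.not_mem_of_discarded E hcf hd⟩
    · right
      simp only [EAFC.Defeats, not_and, not_not] at hdx
      obtain ⟨C, hCX, hCD⟩ := hdx hx
      exact ⟨C, by rwa [EAFCPf.pRange_tset], hCD⟩
  · intro hdec b hb
    rcases hdec b hb.1 with hf | ⟨C, hC, hCD⟩
    · rw [EAFCPf.pRange_false_iff] at hf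
      by_contra hbd
      exact EAFCPf.not_pDiscarded_of_not_discarded E h hcf hf.2 hbd hf.1
    · rw [EAFCPf.pRange_tset] at hC
      exact absurd ⟨C, hC, hCD⟩ hb.2
end
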